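/- arXiv:2206.03172 — 3 statements merged into one kernel-verified Lean document; each statement's English description precedes it below -/
import Mathlib

section
/- Let (R, R′, Is″) be an inter-representational-system encoding, where R = (Gs, Es, Is) and R′ = (Gs′, Es′, Is′). Then (Gs ∪ Gs′, Es ∪ Es′, Is ∪ Is′ ∪ Is″) is a representational system. -/
namespace RST

/-! ## Type systems -/

/-- A relation (given as a set of pairs) is a partial order on the set `Ty`. -/
def IsPartialOrderOn {U : Type*} (Ty : Set U) (le : Set (U × U)) : Prop :=
  (∀ p ∈ le, p.1 ∈ Ty ∧ p.2 ∈ Ty) ∧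
  (∀ τ ∈ Ty, (τ, τ) ∈ le) ∧
  (∀ a b : U, (a, b) ∈ le → (b, a) ∈ le → a = b) ∧
  (∀ a b c : U, (a, b) ∈ le → (b, c) ∈ le → (a, c) ∈ le)

/-- The subtype closure of `Ty'` in the type system `(Ty, le)`. -/
def subtypeClosure {U : Type*} (Ty : Set U) (le : Set (U × U)) (Ty' : Set U) : Set U :=
  {τ | τ ∈ Ty ∧ ∃ τ' ∈ Ty', (τ, τ') ∈ le}

/-- The set of all subtype closures of subsets of `Ty`. -/
def SC {U : Type*} (Ty : Set U) (le : Set (U × U)) : Set (Set U) :=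
  {S | ∃ Ty' ⊆ Ty, S = subtypeClosure Ty le Ty'}

/-- The candidate order of an upper bound extension: the reflexive closure (on `Ty ∪ Tystar`)
of `le` together with the pairs `(τ, f S)` for `τ ∈ S ∈ SC Ty le`. -/
def upperBoundRel {U : Type*} (Ty Tystar : Set U) (le : Set (U × U)) (f : Set U → U) :
    Set (U × U) :=
  (le ∪ {p : U × U | ∃ S ∈ SC Ty le, p.1 ∈ S ∧ p.2 = f S}) ∪
    {p : U × U | p.1 = p.2 ∧ p.1 ∈ Ty ∪ Tystar}

/-! ## Graphs -/

/-- A (raw) directed labelled bipartite graph: tokens `Tk`, configurators `Cf`, arrows `Arr`,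
incidence, arrow indices and vertex labels all given relationally (as sets of pairs), so that
unions of graphs are componentwise unions. -/
structure PreGraph (V A L : Type*) where
  Tk : Set V
  Cf : Set V
  Arr : Set A
  inc : Set (A × (V × V))
  ia : Set (A × ℕ)
  tl : Set (V × L)
  cl : Set (V × L)

variable {V A L : Type*}

instance : Union (PreGraph V A L) :=
  ⟨fun g h =>
    ⟨g.Tk ∪ h.Tk, g.Cf ∪ h.Cf, g.Arr ∪ h.Arr, g.inc ∪ h.inc, g.ia ∪ h.ia,
      g.tl ∪ h.tl, g.cl ∪ h.cl⟩⟩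

def PreGraph.Subgraph (h g : PreGraph V A L) : Prop :=
  h.Tk ⊆ g.Tk ∧ h.Cf ⊆ g.Cf ∧ h.Arr ⊆ g.Arr ∧ h.inc ⊆ g.inc ∧ h.ia ⊆ g.ia ∧
    h.tl ⊆ g.tl ∧ h.cl ⊆ g.cl

/-- The vertices adjacent to `u` (together with `u`). -/
def PreGraph.adjTo (g : PreGraph V A L) (u : V) : Set V :=
  {u} ∪ {v | ∃ a ∈ g.Arr, (a, (v, u)) ∈ g.inc ∨ (a, (u, v)) ∈ g.inc}

/-- The arrows incident to `u`. -/
def PreGraph.incidentArrows (g : PreGraph V A L) (u : V) : Set A :=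
  {a | a ∈ g.Arr ∧ ∃ v, (a, (v, u)) ∈ g.inc ∨ (a, (u, v)) ∈ g.inc}

/-- The restriction of a graph to given vertex and arrow sets. -/
def PreGraph.restrict (g : PreGraph V A L) (Vs : Set V) (As : Set A) : PreGraph V A L :=
  ⟨g.Tk ∩ Vs, g.Cf ∩ Vs, g.Arr ∩ As, {q | q ∈ g.inc ∧ q.1 ∈ As},
    {q | q ∈ g.ia ∧ q.1 ∈ As}, {q | q ∈ g.tl ∧ q.1 ∈ Vs}, {q | q ∈ g.cl ∧ q.1 ∈ Vs}⟩

/-- The neighbourhood of a vertex `u`. -/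
def PreGraph.Nh (g : PreGraph V A L) (u : V) : PreGraph V A L :=
  g.restrict (g.adjTo u) (g.incidentArrows u)

/-- A set of pairs is (the graph of) a function with domain `D`. -/
def IsFunctionOn {α β : Type*} (R : Set (α × β)) (D : Set α) : Prop :=
  (∀ p ∈ R, p.1 ∈ D) ∧ ∀ x ∈ D, ∃! y, (x, y) ∈ R

/-- A raw graph is a genuine directed labelled bipartite graph. -/
def IsGraph (g : PreGraph V A L) : Prop :=
  Disjoint g.Tk g.Cf ∧
  IsFunctionOn g.inc g.Arr ∧
  (∀ a v w, (a, (v, w)) ∈ g.inc → (v ∈ g.Tk ∧ w ∈ g.Cf) ∨ (v ∈ g.Cf ∧ w ∈ g.Tk)) ∧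
  IsFunctionOn g.ia g.Arr ∧ IsFunctionOn g.tl g.Tk ∧ IsFunctionOn g.cl g.Cf

/-- `ars` is the list of incoming arrows of `u`, listed in increasing index order
(the arrow at position `i` carries index `i+1`). -/
def InArrowSeq (g : PreGraph V A L) (u : V) (ars : List A) : Prop :=
  ars.Nodup ∧ (∀ a : A, a ∈ ars ↔ a ∈ g.Arr ∧ ∃ w, (a, (w, u)) ∈ g.inc) ∧
  ∀ (i : ℕ) (a : A), ars[i]? = some a → (a, i + 1) ∈ g.ia

/-- `t` is an output token of the configurator `u`. -/
def OutputTok (g : PreGraph V A L) (u t : V) : Prop :=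
  ∃ a ∈ g.Arr, (a, (u, t)) ∈ g.inc

/-- `ts` is the input token-sequence of the configurator `u`. -/
def InputTokSeq (g : PreGraph V A L) (u : V) (ts : List V) : Prop :=
  ∃ ars : List A, InArrowSeq g u ars ∧
    List.Forall₂ (fun a v => (a, (v, u)) ∈ g.inc) ars ts

/-- `τs` is the input type-sequence of the configurator `u`. -/
def InputTypeSeq (g : PreGraph V A L) (u : V) (τs : List L) : Prop :=
  ∃ ts : List V, InputTokSeq g u ts ∧ List.Forall₂ (fun v τ => (v, τ) ∈ g.tl) ts τs

/-- `g` is a configuration of the constructor `c` (with signature `(ins, out)`),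
whose single configurator is `u`. -/
def IsConfiguration (le : Set (L × L)) (g : PreGraph V A L) (u : V) (c : L)
    (ins : List L) (out : L) : Prop :=
  IsGraph g ∧ g.Cf = {u} ∧ (u, c) ∈ g.cl ∧
  g.Tk = {v | ∃ a ∈ g.Arr, (a, (v, u)) ∈ g.inc ∨ (a, (u, v)) ∈ g.inc} ∧
  (∃! a0 : A, a0 ∈ g.Arr ∧ ∃ w, (a0, (u, w)) ∈ g.inc) ∧
  (∀ a0 ∈ g.Arr, ∀ w : V, (a0, (u, w)) ∈ g.inc →
      (a0, 0) ∈ g.ia ∧ ∃ σ, (w, σ) ∈ g.tl ∧ (σ, out) ∈ le) ∧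
  (∃ ars : List A, InArrowSeq g u ars ∧ ars.length = ins.length ∧
    ∀ (i : ℕ) (a : A) (τ : L), ars[i]? = some a → ins[i]? = some τ →
      ∃ w σ, (a, (w, u)) ∈ g.inc ∧ (w, σ) ∈ g.tl ∧ (σ, τ) ∈ le)

/-- A structure graph for the constructor specification `(C, sig)` over types `(Ty, le)`. -/
def IsStructureGraph (Ty : Set L) (le : Set (L × L)) (C : Set L)
    (sig : Set (L × (List L × L))) (g : PreGraph V A L) : Prop :=
  IsGraph g ∧ (∀ x τ, (x, τ) ∈ g.tl → τ ∈ Ty) ∧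
  ∀ u ∈ g.Cf, ∃ c ins out, (u, c) ∈ g.cl ∧ c ∈ C ∧ (c, (ins, out)) ∈ sig ∧
    IsConfiguration le (g.Nh u) u c ins out

/-! ## Construction spaces -/

/-- The raw data of a construction space: a type system, a constructor specification and
a structure graph. -/
structure CSpace (V A L : Type*) where
  Ty : Set L
  le : Set (L × L)
  C : Set L
  sig : Set (L × (List L × L))
  G : PreGraph V A L

instance : Union (CSpace V A L) :=
  ⟨fun c d => ⟨c.Ty ∪ d.Ty, c.le ∪ d.le, c.C ∪ d.C, c.sig ∪ d.sig, c.G ∪ d.G⟩⟩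

/-- The raw data forms a genuine construction space. -/
def IsCSpace (Cs : CSpace V A L) : Prop :=
  IsPartialOrderOn Cs.Ty Cs.le ∧ Disjoint Cs.C Cs.Ty ∧ IsFunctionOn Cs.sig Cs.C ∧
  (∀ c ins out, (c, (ins, out)) ∈ Cs.sig →
      ins ≠ [] ∧ (∀ τ ∈ ins, τ ∈ Cs.Ty) ∧ out ∈ Cs.Ty) ∧
  IsStructureGraph Cs.Ty Cs.le Cs.C Cs.sig Cs.G

/-- Token-functionality of the constructors of a structure graph. -/
def TokenFunctional (g : PreGraph V A L) : Prop :=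
  ∀ u u' c, u ∈ g.Cf → u' ∈ g.Cf → (u, c) ∈ g.cl → (u', c) ∈ g.cl →
    ∀ ts, InputTokSeq g u ts → InputTokSeq g u' ts →
      ∀ t t', OutputTok g u t → OutputTok g u' t' → t = t'

/-- Type-functionality of the constructors of a structure graph. -/
def TypeFunctional (g : PreGraph V A L) : Prop :=
  ∀ u u' c, u ∈ g.Cf → u' ∈ g.Cf → (u, c) ∈ g.cl → (u', c) ∈ g.cl →
    ∀ τs, InputTypeSeq g u τs → InputTypeSeq g u' τs →
      ∀ t t' τ τ', OutputTok g u t → OutputTok g u' t' →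
        (t, τ) ∈ g.tl → (t', τ') ∈ g.tl → τ = τ'

def IsFunctionalGraph (g : PreGraph V A L) : Prop :=
  TokenFunctional g ∧ TypeFunctional g

/-! ## Representational systems -/

/-- The raw data of a representational system: grammatical, entailment and identification
spaces. -/
structure RSystem (V A L : Type*) where
  Gs : CSpace V A L
  Es : CSpace V A L
  Is : CSpace V A L

instance : Union (RSystem V A L) :=
  ⟨fun r s => ⟨r.Gs ∪ s.Gs, r.Es ∪ s.Es, r.Is ∪ s.Is⟩⟩

/-- The universal space of a representational system. -/
def RSystem.uspace (R : RSystem V A L) : CSpace V A L := (R.Gs ∪ R.Es) ∪ R.Is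

/-- `R` is a representational system formed over the type system `(Ty, le)` and the
meta-type system `(MTy, Mle)`. -/
def IsRSystem (R : RSystem V A L) (Ty : Set L) (le : Set (L × L))
    (MTy : Set L) (Mle : Set (L × L)) : Prop :=
  IsPartialOrderOn Ty le ∧ IsPartialOrderOn MTy Mle ∧
  IsPartialOrderOn (Ty ∪ MTy) (le ∪ Mle) ∧
  R.Gs.Ty = Ty ∧ R.Gs.le = le ∧ IsCSpace R.Gs ∧ IsFunctionalGraph R.Gs.G ∧
  R.Es.Ty = Ty ∧ R.Es.le = le ∧ IsCSpace R.Es ∧ R.Es.G.Tk ⊆ R.Gs.G.Tk ∧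
  R.Is.Ty = Ty ∪ MTy ∧ R.Is.le = le ∪ Mle ∧ IsCSpace R.Is ∧
  (∀ x ∈ R.Is.G.Tk, x ∉ R.Gs.G.Tk → ∃ τ ∈ MTy, (x, τ) ∈ R.Is.G.tl) ∧
  (∀ x ∈ R.Is.G.Tk, (∃ u ∈ R.Is.G.Cf, OutputTok R.Is.G u x) → x ∉ R.Gs.G.Tk) ∧
  IsCSpace (R.Gs ∪ R.Es) ∧ IsCSpace (R.Gs ∪ R.Is) ∧ IsCSpace (R.Es ∪ R.Is) ∧
  Disjoint R.Gs.C R.Es.C ∧ Disjoint R.Gs.C R.Is.C ∧ Disjoint R.Es.C R.Is.C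

/-- `(R, R', Is'')` is an inter-representational-system encoding, where `R` is formed over
`(Ty, le)` and `(MTy, Mle)`, `R'` over `(Ty', le')` and `(MTy', Mle')`, and `Is''` is an
identification space formed over `(Ty ∪ Ty', le ∪ le')` and `(MTy'', Mle'')`. -/
def IsIRSE (R R' : RSystem V A L) (Is'' : CSpace V A L)
    (Ty : Set L) (le : Set (L × L)) (MTy : Set L) (Mle : Set (L × L))
    (Ty' : Set L) (le' : Set (L × L)) (MTy' : Set L) (Mle' : Set (L × L))
    (MTy'' : Set L) (Mle'' : Set (L × L)) : Prop :=
  IsRSystem R Ty le MTy Mle ∧ IsRSystem R' Ty' le' MTy' Mle' ∧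
  IsRSystem (R ∪ R') (Ty ∪ Ty') (le ∪ le') (MTy ∪ MTy') (Mle ∪ Mle') ∧
  IsPartialOrderOn MTy'' Mle'' ∧
  IsPartialOrderOn ((Ty ∪ Ty') ∪ MTy'') ((le ∪ le') ∪ Mle'') ∧
  Is''.Ty = (Ty ∪ Ty') ∪ MTy'' ∧ Is''.le = (le ∪ le') ∪ Mle'' ∧ IsCSpace Is'' ∧
  MTy ∪ MTy' ⊆ MTy'' ∧ Mle ∪ Mle' ⊆ Mle'' ∧
  (∀ x ∈ Is''.G.Tk, x ∉ (R.Gs ∪ R'.Gs).G.Tk → ∃ τ ∈ MTy'', (x, τ) ∈ Is''.G.tl) ∧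
  (∀ x ∈ Is''.G.Tk, (∃ u ∈ Is''.G.Cf, OutputTok Is''.G u x) →
      x ∉ (R.Gs ∪ R'.Gs).G.Tk) ∧
  IsCSpace ((R.Gs ∪ R'.Gs) ∪ Is'') ∧ IsCSpace ((R.Es ∪ R'.Es) ∪ Is'') ∧
  IsCSpace ((R.Is ∪ R'.Is) ∪ Is'') ∧
  Disjoint Is''.C (R.Gs ∪ R'.Gs).C ∧ Disjoint Is''.C (R.Es ∪ R'.Es).C ∧
  Disjoint Is''.C (R.Is ∪ R'.Is).C

/-! ## Trails -/

/-- A trail candidate: a list of arrows together with an associated source and target vertex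
(needed for the empty trail `[]_v`). -/
structure Trail (V A : Type*) where
  arrows : List A
  src : V
  tgt : V

/-- The empty trail `[]_v`. -/
def Trail.nil {V A : Type*} (v : V) : Trail V A := ⟨[], v, v⟩

/-- Concatenation `e ⊕ w` of trails. -/
def Trail.append {V A : Type*} (e w : Trail V A) : Trail V A :=
  ⟨e.arrows ++ w.arrows, e.src, w.tgt⟩

/-- The image of a trail under vertex/arrow maps. -/
def Trail.map {V A : Type*} (fv : V → V) (fa : A → A) (tr : Trail V A) : Trail V A :=
  ⟨tr.arrows.map fa, fv tr.src, fv tr.tgt⟩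

/-- The arrows chain through the graph from `s` to `t`. -/
def ChainIn (g : PreGraph V A L) : List A → V → V → Prop
  | [], s, t => s = t
  | a :: rest, s, t => a ∈ g.Arr ∧ ∃ m, (a, (s, m)) ∈ g.inc ∧ ChainIn g rest m t

/-- `tr` is a trail in `g`. -/
def IsTrailIn (g : PreGraph V A L) (tr : Trail V A) : Prop :=
  tr.arrows.Nodup ∧ ChainIn g tr.arrows tr.src tr.tgt ∧
  tr.src ∈ g.Tk ∪ g.Cf ∧ tr.tgt ∈ g.Tk ∪ g.Cf

/-- A trail is well-formed provided its source and target are tokens. -/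
def WellFormed (g : PreGraph V A L) (tr : Trail V A) : Prop :=
  tr.src ∈ g.Tk ∧ tr.tgt ∈ g.Tk

/-- `tr` is (source-)extendable by the arrow `a`. -/
def ExtendableBy (g : PreGraph V A L) (tr : Trail V A) (a : A) : Prop :=
  a ∈ g.Arr ∧ a ∉ tr.arrows ∧ ∃ s, (a, (s, tr.src)) ∈ g.inc

def Extendable (g : PreGraph V A L) (tr : Trail V A) : Prop :=
  ∃ a, ExtendableBy g tr a

def NonExtendable (g : PreGraph V A L) (tr : Trail V A) : Prop :=
  ¬ Extendable g tr

/-- `TES g tr S` holds iff `S` is the trail extension sequence of the trail `tr` in `g`,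
following the recursive definition of TES. -/
inductive TES (g : PreGraph V A L) : Trail V A → List (Trail V A) → Prop where
  | nonext (tr : Trail V A) (h : NonExtendable g tr) :
      TES g tr [⟨[], tr.src, tr.src⟩]
  | ext (tr : Trail V A) (a : A) (u : V) (ars : List A)
      (Ss : List (List (Trail V A)))
      (hext : ExtendableBy g tr a)
      (hinc : (a, (u, tr.src)) ∈ g.inc)
      (hars : InArrowSeq g u ars)
      (hlen : Ss.length = ars.length)
      (hrec : ∀ (i : ℕ) (ai : A) (si : V) (Si : List (Trail V A)),
          ars[i]? = some ai → Ss[i]? = some Si → (ai, (si, u)) ∈ g.inc →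
          TES g ⟨ai :: a :: tr.arrows, si, tr.tgt⟩ Si) :
      TES g tr (List.flatten (List.zipWith
        (fun (ai : A) (Si : List (Trail V A)) =>
          Si.map (fun e => (⟨e.arrows ++ [ai, a], e.src, tr.src⟩ : Trail V A)))
        ars Ss))

/-- The sequence of sources of a sequence of trails. -/
def srcSeq {V A : Type*} (S : List (Trail V A)) : List V := S.map Trail.src

/-- The right product `S ◁ w`, appending the trail `w` to each trail in `S`. -/
def rprod {V A : Type*} (S : List (Trail V A)) (w : Trail V A) : List (Trail V A) :=
  S.map fun e => e.append w

/-! ## Constructions -/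

/-- Every token is the target of at most one arrow. -/
def UniStructured (g : PreGraph V A L) : Prop :=
  ∀ x ∈ g.Tk, ∀ a ∈ g.Arr, ∀ b ∈ g.Arr,
    (∃ w, (a, (w, x)) ∈ g.inc) → (∃ w, (b, (w, x)) ∈ g.inc) → a = b

/-- `(g, t)` is a construction in the construction space `Cs`: `g` is a finite uni-structured
structure graph (a subgraph of the structure graph of `Cs`), `t` is a token of `g`, and every
vertex of `g` is the source of a trail targeting `t`. -/
def IsConstruction (Cs : CSpace V A L) (g : PreGraph V A L) (t : V) : Prop :=
  g.Subgraph Cs.G ∧ IsStructureGraph Cs.Ty Cs.le Cs.C Cs.sig g ∧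
  g.Tk.Finite ∧ g.Cf.Finite ∧ g.Arr.Finite ∧ UniStructured g ∧ t ∈ g.Tk ∧
  ∀ v ∈ g.Tk ∪ g.Cf, ∃ tr : Trail V A, IsTrailIn g tr ∧ tr.src = v ∧ tr.tgt = t

/-- `(g, t)` is a construction *in* `Cs` in the strong sense: moreover every configurator of `g`
has its full neighbourhood from the structure graph of `Cs`. -/
def IsConstructionIn (Cs : CSpace V A L) (g : PreGraph V A L) (t : V) : Prop :=
  IsConstruction Cs g t ∧ ∀ u ∈ g.Cf, g.Nh u = Cs.G.Nh u

/-- A trivial construction: the construct is its only vertex. -/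
def TrivialC (g : PreGraph V A L) (t : V) : Prop := g.Tk ∪ g.Cf = {t}

/-- A basic construction: exactly one configurator. -/
def BasicC (g : PreGraph V A L) : Prop := ∃ u, g.Cf = {u}

/-- The set of arrows occurring in a sequence of trails. -/
def trailArrowSet {V A : Type*} (TR : List (Trail V A)) : Set A :=
  {a | ∃ tr ∈ TR, a ∈ tr.arrows}

/-- The vertices of the `TR`-graph: vertices incident to arrows of trails of `TR`,
together with the associated vertex of any empty trail of `TR`. -/
def trailVertexSet (g : PreGraph V A L) (TR : List (Trail V A)) : Set V :=
  {v | (∃ a ∈ trailArrowSet TR, ∃ w, (a, (v, w)) ∈ g.inc ∨ (a, (w, v)) ∈ g.inc) ∨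
    ∃ tr ∈ TR, tr.arrows = [] ∧ tr.src = v}

/-- The `TR`-graph `v(TR)`. -/
def trGraph (g : PreGraph V A L) (TR : List (Trail V A)) : PreGraph V A L :=
  g.restrict (trailVertexSet g TR) (trailArrowSet TR)

/-- `((g', t), ics)` is a split of the construction `(g, t)`: `(g', t)` is a generator and
`ics` is the corresponding induced construction sequence (each induced construction is
`(v(TES(tri)), source(tri))`, the TES being computed in `(g, t)`). -/
def IsSplit (Cs : CSpace V A L) (g : PreGraph V A L) (t : V)
    (g' : PreGraph V A L) (ics : List (PreGraph V A L × V)) : Prop :=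
  IsConstruction Cs g' t ∧ g'.Subgraph g ∧
  ∃ trs : List (Trail V A), TES g' (Trail.nil t) trs ∧ ics.length = trs.length ∧
    ∀ (i : ℕ) (tri : Trail V A), trs[i]? = some tri →
      ∃ Si : List (Trail V A), TES g tri Si ∧ ics[i]? = some (trGraph g Si, tri.src)

/-! ## Decompositions -/

/-- A decomposition tree: vertices labelled by a graph and a token, with the incoming arrows
of every vertex given in index order by a list of subtrees. -/
inductive DTree (V A L : Type*) where
  | node : PreGraph V A L → V → List (DTree V A L) → DTree V A L

def DTree.rootGraph : DTree V A L → PreGraph V A L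
  | .node g _ _ => g

def DTree.rootTok : DTree V A L → V
  | .node _ t _ => t

def DTree.kids : DTree V A L → List (DTree V A L)
  | .node _ _ cs => cs

/-- `IsDecompositionOf Cs D g t` holds iff `D` is a decomposition of the construction
`(g, t)` in `Cs`. -/
inductive IsDecompositionOf (Cs : CSpace V A L) : DTree V A L → PreGraph V A L → V → Prop where
  | single (g : PreGraph V A L) (t : V) (h : IsConstruction Cs g t) :
      IsDecompositionOf Cs (.node g t []) g t
  | split (g : PreGraph V A L) (t : V) (g' : PreGraph V A L)
      (ics : List (PreGraph V A L × V)) (cs : List (DTree V A L))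
      (hc : IsConstruction Cs g t)
      (hsplit : IsSplit Cs g t g' ics)
      (hlen : cs.length = ics.length)
      (hrec : ∀ (i : ℕ) (ci : DTree V A L) (gi : PreGraph V A L) (ti : V),
          cs[i]? = some ci → ics[i]? = some (gi, ti) → IsDecompositionOf Cs ci gi ti) :
      IsDecompositionOf Cs (.node g' t cs) g t

/-- `LcsRel D ls` holds iff `ls` is the leaf construction-sequence of `D`. -/
inductive LcsRel : DTree V A L → List (PreGraph V A L × V) → Prop where
  | leaf (g : PreGraph V A L) (t : V) : LcsRel (.node g t []) [(g, t)]
  | node (g : PreGraph V A L) (t : V) (cs : List (DTree V A L))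
      (ls : List (List (PreGraph V A L × V)))
      (hne : cs ≠ []) (hlen : ls.length = cs.length)
      (h : ∀ (i : ℕ) (ci : DTree V A L) (li : List (PreGraph V A L × V)),
          cs[i]? = some ci → ls[i]? = some li → LcsRel ci li) :
      LcsRel (.node g t cs) ls.flatten

/-- `(p, w)` is one of the constructions labelling a vertex of the decomposition tree. -/
inductive LabelOf : DTree V A L → PreGraph V A L → V → Prop where
  | root (g : PreGraph V A L) (t : V) (cs : List (DTree V A L)) :
      LabelOf (.node g t cs) g t
  | child (g : PreGraph V A L) (t : V) (cs : List (DTree V A L))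
      (c : DTree V A L) (p : PreGraph V A L) (w : V) :
      c ∈ cs → LabelOf c p w → LabelOf (.node g t cs) p w

/-- The union of all the graphs labelling vertices of the decomposition tree
(the graph of the construction `ct(D)` of the decomposition `D`). -/
def DTree.ctGraph (D : DTree V A L) : PreGraph V A L :=
  ⟨{x | ∃ p w, LabelOf D p w ∧ x ∈ p.Tk},
   {x | ∃ p w, LabelOf D p w ∧ x ∈ p.Cf},
   {a | ∃ p w, LabelOf D p w ∧ a ∈ p.Arr},
   {q | ∃ p w, LabelOf D p w ∧ q ∈ p.inc},
   {q | ∃ p w, LabelOf D p w ∧ q ∈ p.ia},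
   {q | ∃ p w, LabelOf D p w ∧ q ∈ p.tl},
   {q | ∃ p w, LabelOf D p w ∧ q ∈ p.cl}⟩

/-- Every vertex label of the decomposition tree satisfies `P`. -/
inductive AllLabels (P : PreGraph V A L → V → Prop) : DTree V A L → Prop where
  | node (g : PreGraph V A L) (t : V) (cs : List (DTree V A L)) :
      P g t → (∀ c, c ∈ cs → AllLabels P c) → AllLabels P (.node g t cs)

/-- The subtree of a decomposition tree at a given position (a path of child indices). -/
def subtreeAt : List ℕ → DTree V A L → Option (DTree V A L)
  | [], D => some D
  | i :: rest, .node _ _ cs =>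
    match cs[i]? with
    | some c => subtreeAt rest c
    | none => none

/-! ## Patterns and embeddings -/

/-- An embedding of the graph `g` into the graph `p`: an isomorphism preserving arrow indices
and configurator labels, with token labels respecting the subtype relation `le`. -/
def IsEmbedding (le : Set (L × L)) (g p : PreGraph V A L) (fv : V → V) (fa : A → A) : Prop :=
  (∀ x ∈ g.Tk, fv x ∈ p.Tk) ∧ (∀ x ∈ g.Cf, fv x ∈ p.Cf) ∧
  (∀ x ∈ g.Tk ∪ g.Cf, ∀ y ∈ g.Tk ∪ g.Cf, fv x = fv y → x = y) ∧
  (∀ y ∈ p.Tk, ∃ x ∈ g.Tk, fv x = y) ∧ (∀ y ∈ p.Cf, ∃ x ∈ g.Cf, fv x = y) ∧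
  (∀ a ∈ g.Arr, fa a ∈ p.Arr) ∧
  (∀ a ∈ g.Arr, ∀ b ∈ g.Arr, fa a = fa b → a = b) ∧
  (∀ b ∈ p.Arr, ∃ a ∈ g.Arr, fa a = b) ∧
  (∀ a v w, (a, (v, w)) ∈ g.inc → (fa a, (fv v, fv w)) ∈ p.inc) ∧
  (∀ a n, (a, n) ∈ g.ia → (fa a, n) ∈ p.ia) ∧
  (∀ u c, (u, c) ∈ g.cl → (fv u, c) ∈ p.cl) ∧
  (∀ x τ, (x, τ) ∈ g.tl → ∃ σ, (fv x, σ) ∈ p.tl ∧ (τ, σ) ∈ le)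

/-- The construction `(g, t)` matches the pattern `(p, v)`. -/
def MatchesPattern (le : Set (L × L)) (g : PreGraph V A L) (t : V)
    (p : PreGraph V A L) (v : V) : Prop :=
  ∃ fv fa, IsEmbedding le g p fv fa ∧ fv t = v

/-- `Ps` is a pattern space for `Cs`: a construction space over the same type system and
constructor specification such that every construction of `Cs` matches some construction
of `Ps`. -/
def IsPatternSpace (Cs Ps : CSpace V A L) : Prop :=
  Ps.Ty = Cs.Ty ∧ Ps.le = Cs.le ∧ Ps.C = Cs.C ∧ Ps.sig = Cs.sig ∧ IsCSpace Ps ∧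
  ∀ g t, IsConstruction Cs g t →
    ∃ p v, IsConstruction Ps p v ∧ MatchesPattern Cs.le g t p v

/-- Vertex-wise matching of two same-shape decomposition trees under a common pair of maps. -/
inductive DMatches (le : Set (L × L)) (fv : V → V) (fa : A → A) :
    DTree V A L → DTree V A L → Prop where
  | node (g : PreGraph V A L) (t : V) (p : PreGraph V A L) (v : V)
      (cs ds : List (DTree V A L))
      (hemb : IsEmbedding le g p fv fa) (ht : fv t = v)
      (hlen : cs.length = ds.length)
      (hrec : ∀ (i : ℕ) (ci di : DTree V A L), cs[i]? = some ci → ds[i]? = some di →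
          DMatches le fv fa ci di) :
      DMatches le fv fa (.node g t cs) (.node p v ds)

/-- The decomposition `D` matches the (pattern) decomposition `Δ`: there is an arrow-index
preserving isomorphism of trees together with an embedding of `ct(D)` into `ct(Δ)` whose
restriction to each vertex label is an embedding into the corresponding pattern label. -/
def DecompositionMatches (le : Set (L × L)) (D Δ : DTree V A L) : Prop :=
  ∃ fv fa, IsEmbedding le D.ctGraph Δ.ctGraph fv fa ∧ fv D.rootTok = Δ.rootTok ∧
    DMatches le fv fa D Δ

/-! ## Descriptions -/

/-- A description: a set of decompositions of patterns (constructions in the pattern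
space `Ps`). -/
def IsDescriptionOf (Ps : CSpace V A L) (Ds : Set (DTree V A L)) : Prop :=
  ∀ Δ ∈ Ds, ∃ p v, IsConstruction Ps p v ∧ IsDecompositionOf Ps Δ p v

/-- The description `Ds` is complete for `Cs`. -/
def CompleteDescription (Cs : CSpace V A L) (Ds : Set (DTree V A L)) : Prop :=
  ∀ g t, IsConstruction Cs g t →
    ∃ Δ ∈ Ds, ∃ D, IsDecompositionOf Cs D g t ∧ DecompositionMatches Cs.le D Δ

/-- The set of patterns labelling vertices of decompositions in `Ds`. -/
def PatternsOf (Ds : Set (DTree V A L)) : Set (PreGraph V A L × V) :=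
  {pv | ∃ Δ ∈ Ds, LabelOf Δ pv.1 pv.2}

/-- Label-preserving isomorphism of patterns/constructions. -/
def LabelIsomorphic (g : PreGraph V A L) (t : V) (p : PreGraph V A L) (v : V) : Prop :=
  ∃ fv fa, IsEmbedding {q : L × L | q.1 = q.2} g p fv fa ∧ fv t = v

/-- The description `Ds` is compact: finitely many patterns up to label-preserving
isomorphism. -/
def CompactDescription (Ds : Set (DTree V A L)) : Prop :=
  ∃ Reps : Set (PreGraph V A L × V), Reps.Finite ∧
    ∀ pv ∈ PatternsOf Ds, ∃ qw ∈ Reps, LabelIsomorphic pv.1 pv.2 qw.1 qw.2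

/-! ## Transformation constraints and structural transformations -/

/-- A transformation-constraint-shaped triple: two patterns (or constructions) together with
a set of patterns (or constructions). -/
structure TConstraint (V A L : Type*) where
  pa : PreGraph V A L
  ca : V
  pb : PreGraph V A L
  cb : V
  Pc : Set (PreGraph V A L × V)

/-- The union of the graphs of a set of patterns. -/
def pGraph (P : Set (PreGraph V A L × V)) : PreGraph V A L :=
  ⟨{x | ∃ pv ∈ P, x ∈ pv.1.Tk}, {x | ∃ pv ∈ P, x ∈ pv.1.Cf},
   {a | ∃ pv ∈ P, a ∈ pv.1.Arr}, {q | ∃ pv ∈ P, q ∈ pv.1.inc},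
   {q | ∃ pv ∈ P, q ∈ pv.1.ia}, {q | ∃ pv ∈ P, q ∈ pv.1.tl},
   {q | ∃ pv ∈ P, q ∈ pv.1.cl}⟩

/-- A respectful embedding of the set of patterns `P` into the set of patterns `P'`. -/
def RespectfulEmbedding (le : Set (L × L)) (P P' : Set (PreGraph V A L × V))
    (fv : V → V) (fa : A → A) : Prop :=
  IsEmbedding le (pGraph P) (pGraph P') fv fa ∧
  ∀ pv ∈ P, ∃ qw ∈ P', IsEmbedding le pv.1 qw.1 fv fa ∧ fv pv.2 = qw.2

/-- Satisfaction of one transformation-constraint-shaped triple by another: embeddings of the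
first two components, a respectful embedding of the third, whose common underlying maps give
an isomorphism of the unions of the graphs. -/
def TCSatisfies (le : Set (L × L)) (s s' : TConstraint V A L) : Prop :=
  ∃ fv fa,
    IsEmbedding le s.pa s'.pa fv fa ∧ fv s.ca = s'.ca ∧
    IsEmbedding le s.pb s'.pb fv fa ∧ fv s.cb = s'.cb ∧
    RespectfulEmbedding le s.Pc s'.Pc fv fa ∧
    IsEmbedding le ((s.pa ∪ s.pb) ∪ pGraph s.Pc) ((s'.pa ∪ s'.pb) ∪ pGraph s'.Pc) fv fa

/-- A transformation constraint for an encoding described by `(Ds, Ds', P'')`. -/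
def IsTransformationConstraint (Ds Ds' : Set (DTree V A L))
    (P'' : Set (PreGraph V A L × V)) (s : TConstraint V A L) : Prop :=
  (s.pa, s.ca) ∈ PatternsOf Ds ∧ (s.pb, s.cb) ∈ PatternsOf Ds' ∧ s.Pc ⊆ P''

/-- A constraint assignment for `Δ` and `Δ'`: a partial function (modelled with `Option`) on
pairs of vertices (paths) whose values are transformation constraints from `S0` matched by the
corresponding labels. -/
def IsConstraintAssignment (leR leR' : Set (L × L)) (S0 : Set (TConstraint V A L))
    (Δ Δ' : DTree V A L) (Lm : List ℕ → List ℕ → Option (TConstraint V A L)) : Prop :=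
  ∀ pi pi' s, Lm pi pi' = some s → s ∈ S0 ∧
    (∃ δ, subtreeAt pi Δ = some δ ∧
        MatchesPattern leR δ.rootGraph δ.rootTok s.pa s.ca) ∧
    (∃ δ', subtreeAt pi' Δ' = some δ' ∧
        MatchesPattern leR' δ'.rootGraph δ'.rootTok s.pb s.cb)

/-- The constraint assignment `Lm` is satisfied by the pair of decompositions `(D, D')`
(whose vertices correspond, via the shape-preserving matchings, to those of `Δ`, `Δ'`). -/
def LSatisfiedBy (leI : Set (L × L)) (Ip : CSpace V A L)
    (Lm : List ℕ → List ℕ → Option (TConstraint V A L)) (D D' : DTree V A L) : Prop :=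
  ∀ pi pi' s d d', Lm pi pi' = some s →
    subtreeAt pi D = some d → subtreeAt pi' D' = some d' →
    ∃ Cset : Set (PreGraph V A L × V),
      (∀ pv ∈ Cset, IsConstruction Ip pv.1 pv.2) ∧
      TCSatisfies leI ⟨d.rootGraph, d.rootTok, d'.rootGraph, d'.rootTok, Cset⟩ s

/-- `(g', t')` is a structural `L`-transformation of `(g, t)` (with respect to the pattern
decompositions `Δ`, `Δ'` for the universal spaces `Ru`, `Ru'` and the inter-property
identification space `Ip`). -/
def IsStructuralLTransformation (Ru Ru' Ip : CSpace V A L) (Δ Δ' : DTree V A L)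
    (Lm : List ℕ → List ℕ → Option (TConstraint V A L))
    (g : PreGraph V A L) (t : V) (g' : PreGraph V A L) (t' : V) : Prop :=
  (∃ D, IsDecompositionOf Ru D g t ∧ DecompositionMatches Ru.le D Δ) ∧
  (∃ D', IsDecompositionOf Ru' D' g' t' ∧ DecompositionMatches Ru'.le D' Δ') ∧
  ∀ D D', IsDecompositionOf Ru D g t → DecompositionMatches Ru.le D Δ →
    IsDecompositionOf Ru' D' g' t' → DecompositionMatches Ru'.le D' Δ' →
    LSatisfiedBy Ip.le Ip Lm D D'

/-- Partial satisfaction: the constraint is only checked at vertices of the pattern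
decomposition `Δh` whose label is already a construction in `Ru'`. -/
def LPartialSatisfiedBy (leI : Set (L × L)) (Ip Ru' : CSpace V A L)
    (Lm : List ℕ → List ℕ → Option (TConstraint V A L)) (D Δh : DTree V A L) : Prop :=
  ∀ pi pi' s d δh, Lm pi pi' = some s →
    subtreeAt pi D = some d → subtreeAt pi' Δh = some δh →
    IsConstructionIn Ru' δh.rootGraph δh.rootTok →
    ∃ Cset : Set (PreGraph V A L × V),
      (∀ pv ∈ Cset, IsConstruction Ip pv.1 pv.2) ∧
      TCSatisfies leI ⟨d.rootGraph, d.rootTok, δh.rootGraph, δh.rootTok, Cset⟩ s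

/-- The pattern `(ph, vh)` (a construction in the pattern space `Ps'` for `Ru'`) is a partial
`L`-transformation of the construction `(g, t)`. -/
def IsPartialLTransformation (Ru Ru' Ip Ps' : CSpace V A L) (Δ Δ' : DTree V A L)
    (Lm : List ℕ → List ℕ → Option (TConstraint V A L))
    (g : PreGraph V A L) (t : V) (ph : PreGraph V A L) (vh : V) : Prop :=
  (∃ D, IsDecompositionOf Ru D g t ∧ DecompositionMatches Ru.le D Δ) ∧
  (∃ Δh, IsDecompositionOf Ps' Δh ph vh ∧ DecompositionMatches Ru'.le Δh Δ') ∧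
  ∀ D Δh, IsDecompositionOf Ru D g t → DecompositionMatches Ru.le D Δ →
    IsDecompositionOf Ps' Δh ph vh → DecompositionMatches Ru'.le Δh Δ' →
    LPartialSatisfiedBy Ip.le Ip Ru' Lm D Δh

/-! ## Validity, soundness, leaf instantiation -/

/-- Validity of `Lm` for `(g, t)` and `(p, v)` at the pair of vertices `(pi, pi')`. -/
def ValidAt (Ru Ru' Ip Ps' : CSpace V A L) (Δ Δ' : DTree V A L)
    (Lm : List ℕ → List ℕ → Option (TConstraint V A L))
    (g : PreGraph V A L) (t : V) (p : PreGraph V A L) (v : V)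
    (pi pi' : List ℕ) : Prop :=
  ∀ D Δh Dsub Δhsub Δsub Δsub',
    IsDecompositionOf Ru D g t → DecompositionMatches Ru.le D Δ →
    IsDecompositionOf Ps' Δh p v → DecompositionMatches Ru'.le Δh Δ' →
    subtreeAt pi D = some Dsub → subtreeAt pi' Δh = some Δhsub →
    subtreeAt pi Δ = some Δsub → subtreeAt pi' Δ' = some Δsub' →
    IsConstructionIn Ru' Δhsub.ctGraph Δhsub.rootTok →
    IsStructuralLTransformation Ru Ru' Ip Δsub Δsub'
      (fun σ σ' => Lm (pi ++ σ) (pi' ++ σ'))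
      Dsub.ctGraph Dsub.rootTok Δhsub.ctGraph Δhsub.rootTok

/-- Ancestor-validity: validity at every pair of proper descendants-in-the-tree
("ancestors" in the paper's in-tree terminology). -/
def AncestorValidAt (Ru Ru' Ip Ps' : CSpace V A L) (Δ Δ' : DTree V A L)
    (Lm : List ℕ → List ℕ → Option (TConstraint V A L))
    (g : PreGraph V A L) (t : V) (p : PreGraph V A L) (v : V)
    (pi pi' : List ℕ) : Prop :=
  ∀ σ σ' : List ℕ, σ ≠ [] → σ' ≠ [] →
    (∃ d, subtreeAt (pi ++ σ) Δ = some d) → (∃ d', subtreeAt (pi' ++ σ') Δ' = some d') →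
    ValidAt Ru Ru' Ip Ps' Δ Δ' Lm g t p v (pi ++ σ) (pi' ++ σ')

/-- Soundness of a constraint assignment. -/
def SoundAssignment (Ru Ru' Ip Ps' : CSpace V A L) (Δ Δ' : DTree V A L)
    (Lm : List ℕ → List ℕ → Option (TConstraint V A L)) : Prop :=
  ∀ g t, IsConstructionIn Ru g t →
    (∃ D, IsDecompositionOf Ru D g t ∧ DecompositionMatches Ru.le D Δ) →
    ∀ p v, IsConstruction Ps' p v →
      (∃ Δh, IsDecompositionOf Ps' Δh p v ∧ DecompositionMatches Ru'.le Δh Δ') →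
      ∀ pi pi', (∃ d, subtreeAt pi Δ = some d) → (∃ d', subtreeAt pi' Δ' = some d') →
        AncestorValidAt Ru Ru' Ip Ps' Δ Δ' Lm g t p v pi pi' →
        ValidAt Ru Ru' Ip Ps' Δ Δ' Lm g t p v pi pi'

/-- The pattern `(p, v)` leaf-instantiates `Δ'`: it matches `Δ'` and every leaf of its
`Δ'`-canonical decomposition is labelled by a construction in `Ru'`. -/
def LeafInstantiates (Ru' Ps' : CSpace V A L) (Δ' : DTree V A L)
    (p : PreGraph V A L) (v : V) : Prop :=
  (∃ Δh, IsDecompositionOf Ps' Δh p v ∧ DecompositionMatches Ru'.le Δh Δ') ∧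
  ∀ Δh, IsDecompositionOf Ps' Δh p v → DecompositionMatches Ru'.le Δh Δ' →
    ∀ pi δh, subtreeAt pi Δh = some δh → δh.kids = [] →
      IsConstructionIn Ru' δh.rootGraph δh.rootTok

/-- A complete extension of a pattern `(p, v)` that leaf-instantiates `Δ'`. -/
def CompleteExtension (Ru' Ps' : CSpace V A L) (Δ' : DTree V A L)
    (p : PreGraph V A L) (v : V) (g' : PreGraph V A L) (t' : V) : Prop :=
  IsConstructionIn Ru' g' t' ∧
  ∃ fv fa, IsEmbedding Ru'.le g' p fv fa ∧ fv t' = v ∧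
    ∀ Δh, IsDecompositionOf Ps' Δh p v → DecompositionMatches Ru'.le Δh Δ' →
      ∀ pi δh, subtreeAt pi Δh = some δh → δh.kids = [] →
        ∀ x ∈ δh.rootGraph.Tk, x ∈ g'.Tk ∧ fv x = x

/-- `(g, t)` and `(p, v)` are valid at the leaves of `Δ` and `Δ'`. -/
def ValidAtLeaves (Ru Ru' Ip Ps' : CSpace V A L) (Δ Δ' : DTree V A L)
    (Lm : List ℕ → List ℕ → Option (TConstraint V A L))
    (g : PreGraph V A L) (t : V) (p : PreGraph V A L) (v : V) : Prop :=
  ∀ pi pi' δ δ', subtreeAt pi Δ = some δ → subtreeAt pi' Δ' = some δ' →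
    δ.kids = [] → δ'.kids = [] →
    ValidAt Ru Ru' Ip Ps' Δ Δ' Lm g t p v pi pi'


/-! ## Helper lemmas for Statement 4 -/

@[simp] lemma union_Ty (c d : CSpace V A L) : (c ∪ d).Ty = c.Ty ∪ d.Ty := rfl
@[simp] lemma union_le (c d : CSpace V A L) : (c ∪ d).le = c.le ∪ d.le := rfl
@[simp] lemma union_C (c d : CSpace V A L) : (c ∪ d).C = c.C ∪ d.C := rfl
@[simp] lemma union_sig (c d : CSpace V A L) : (c ∪ d).sig = c.sig ∪ d.sig := rfl
@[simp] lemma union_G (c d : CSpace V A L) : (c ∪ d).G = c.G ∪ d.G := rfl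

lemma PreGraph.ext' {g h : PreGraph V A L} (h1 : g.Tk = h.Tk) (h2 : g.Cf = h.Cf)
    (h3 : g.Arr = h.Arr) (h4 : g.inc = h.inc) (h5 : g.ia = h.ia) (h6 : g.tl = h.tl)
    (h7 : g.cl = h.cl) : g = h := by
  cases g; cases h; simp_all

lemma funOn_unique {α β : Type*} {Rel : Set (α × β)} {D : Set α}
    (h : IsFunctionOn Rel D) {x : α} {y1 y2 : β} (h1 : (x, y1) ∈ Rel) (h2 : (x, y2) ∈ Rel) :
    y1 = y2 := by
  obtain ⟨y, -, huniq⟩ := h.2 x (h.1 _ h1)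
  rw [huniq y1 h1, huniq y2 h2]

lemma isFunctionOn_union3 {α β : Type*} {R1 R2 R3 : Set (α × β)} {D1 D2 D3 : Set α}
    (h12 : IsFunctionOn (R1 ∪ R2) (D1 ∪ D2))
    (h13 : IsFunctionOn (R1 ∪ R3) (D1 ∪ D3))
    (h23 : IsFunctionOn (R2 ∪ R3) (D2 ∪ D3)) :
    IsFunctionOn (R1 ∪ (R2 ∪ R3)) (D1 ∪ (D2 ∪ D3)) := by
  have uniq : ∀ (x : α) (y y' : β), (x, y) ∈ R1 ∪ (R2 ∪ R3) → (x, y') ∈ R1 ∪ (R2 ∪ R3) →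
      y = y' := by
    rintro x y y' (h | h | h) (h' | h' | h')
    · exact funOn_unique h12 (Or.inl h) (Or.inl h')
    · exact funOn_unique h12 (Or.inl h) (Or.inr h')
    · exact funOn_unique h13 (Or.inl h) (Or.inr h')
    · exact funOn_unique h12 (Or.inr h) (Or.inl h')
    · exact funOn_unique h12 (Or.inr h) (Or.inr h')
    · exact funOn_unique h23 (Or.inl h) (Or.inr h')
    · exact funOn_unique h13 (Or.inr h) (Or.inl h')
    · exact funOn_unique h23 (Or.inr h) (Or.inl h')
    · exact funOn_unique h13 (Or.inr h) (Or.inr h')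
  constructor
  · rintro p (h | h | h)
    · rcases h12.1 p (Or.inl h) with h' | h'
      exacts [Or.inl h', Or.inr (Or.inl h')]
    · rcases h12.1 p (Or.inr h) with h' | h'
      exacts [Or.inl h', Or.inr (Or.inl h')]
    · rcases h13.1 p (Or.inr h) with h' | h'
      exacts [Or.inl h', Or.inr (Or.inr h')]
  · intro x hx
    have hex : ∃ y, (x, y) ∈ R1 ∪ (R2 ∪ R3) := by
      rcases hx with h | h | h
      · obtain ⟨y, hy, -⟩ := h12.2 x (Or.inl h)
        rcases hy with h' | h'
        exacts [⟨y, Or.inl h'⟩, ⟨y, Or.inr (Or.inl h')⟩]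
      · obtain ⟨y, hy, -⟩ := h12.2 x (Or.inr h)
        rcases hy with h' | h'
        exacts [⟨y, Or.inl h'⟩, ⟨y, Or.inr (Or.inl h')⟩]
      · obtain ⟨y, hy, -⟩ := h23.2 x (Or.inr h)
        rcases hy with h' | h'
        exacts [⟨y, Or.inr (Or.inl h')⟩, ⟨y, Or.inr (Or.inr h')⟩]
    obtain ⟨y, hy⟩ := hex
    exact ⟨y, hy, fun y' hy' => uniq x y' y hy' hy⟩

lemma disjoint_union3 {α : Type*} {A1 A2 A3 B1 B2 B3 : Set α}
    (h12 : Disjoint (A1 ∪ A2) (B1 ∪ B2)) (h13 : Disjoint (A1 ∪ A3) (B1 ∪ B3))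
    (h23 : Disjoint (A2 ∪ A3) (B2 ∪ B3)) :
    Disjoint (A1 ∪ (A2 ∪ A3)) (B1 ∪ (B2 ∪ B3)) := by
  rw [Set.disjoint_left]
  rw [Set.disjoint_left] at h12 h13 h23
  rintro x (h | h | h) (h' | h' | h')
  · exact h12 (Or.inl h) (Or.inl h')
  · exact h12 (Or.inl h) (Or.inr h')
  · exact h13 (Or.inl h) (Or.inr h')
  · exact h12 (Or.inr h) (Or.inl h')
  · exact h12 (Or.inr h) (Or.inr h')
  · exact h23 (Or.inl h) (Or.inr h')
  · exact h13 (Or.inr h) (Or.inl h')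
  · exact h23 (Or.inr h) (Or.inl h')
  · exact h13 (Or.inr h) (Or.inr h')

lemma isPartialOrderOn_union3 {Ty1 Ty2 Ty3 : Set L} {le1 le2 le3 : Set (L × L)}
    (h12 : IsPartialOrderOn (Ty1 ∪ Ty2) (le1 ∪ le2))
    (h13 : IsPartialOrderOn (Ty1 ∪ Ty3) (le1 ∪ le3))
    (h23 : IsPartialOrderOn (Ty2 ∪ Ty3) (le2 ∪ le3)) :
    IsPartialOrderOn (Ty1 ∪ (Ty2 ∪ Ty3)) (le1 ∪ (le2 ∪ le3)) := by
  have mTy12 : Ty1 ∪ Ty2 ⊆ Ty1 ∪ (Ty2 ∪ Ty3) :=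
    Set.union_subset_union_right _ Set.subset_union_left
  have mTy13 : Ty1 ∪ Ty3 ⊆ Ty1 ∪ (Ty2 ∪ Ty3) :=
    Set.union_subset_union_right _ Set.subset_union_right
  have mle12 : le1 ∪ le2 ⊆ le1 ∪ (le2 ∪ le3) :=
    Set.union_subset_union_right _ Set.subset_union_left
  have mle13 : le1 ∪ le3 ⊆ le1 ∪ (le2 ∪ le3) :=
    Set.union_subset_union_right _ Set.subset_union_right
  have mle23 : le2 ∪ le3 ⊆ le1 ∪ (le2 ∪ le3) := Set.subset_union_right
  refine ⟨?_, ?_, ?_, ?_⟩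
  · rintro p (h | h | h)
    · exact ⟨mTy12 (h12.1 p (Or.inl h)).1, mTy12 (h12.1 p (Or.inl h)).2⟩
    · exact ⟨mTy12 (h12.1 p (Or.inr h)).1, mTy12 (h12.1 p (Or.inr h)).2⟩
    · exact ⟨mTy13 (h13.1 p (Or.inr h)).1, mTy13 (h13.1 p (Or.inr h)).2⟩
  · rintro τ (h | h | h)
    · exact mle12 (h12.2.1 τ (Or.inl h))
    · exact mle12 (h12.2.1 τ (Or.inr h))
    · exact mle23 (h23.2.1 τ (Or.inr h))
  · rintro a b (h | h | h) (h' | h' | h')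
    · exact h12.2.2.1 a b (Or.inl h) (Or.inl h')
    · exact h12.2.2.1 a b (Or.inl h) (Or.inr h')
    · exact h13.2.2.1 a b (Or.inl h) (Or.inr h')
    · exact h12.2.2.1 a b (Or.inr h) (Or.inl h')
    · exact h12.2.2.1 a b (Or.inr h) (Or.inr h')
    · exact h23.2.2.1 a b (Or.inl h) (Or.inr h')
    · exact h13.2.2.1 a b (Or.inr h) (Or.inl h')
    · exact h23.2.2.1 a b (Or.inr h) (Or.inl h')
    · exact h13.2.2.1 a b (Or.inr h) (Or.inr h')
  · rintro a b c (h | h | h) (h' | h' | h')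
    · exact mle12 (h12.2.2.2 a b c (Or.inl h) (Or.inl h'))
    · exact mle12 (h12.2.2.2 a b c (Or.inl h) (Or.inr h'))
    · exact mle13 (h13.2.2.2 a b c (Or.inl h) (Or.inr h'))
    · exact mle12 (h12.2.2.2 a b c (Or.inr h) (Or.inl h'))
    · exact mle12 (h12.2.2.2 a b c (Or.inr h) (Or.inr h'))
    · exact mle23 (h23.2.2.2 a b c (Or.inl h) (Or.inr h'))
    · exact mle13 (h13.2.2.2 a b c (Or.inr h) (Or.inl h'))
    · exact mle23 (h23.2.2.2 a b c (Or.inr h) (Or.inl h'))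
    · exact mle13 (h13.2.2.2 a b c (Or.inr h) (Or.inr h'))

lemma isConfiguration_mono {le le' : Set (L × L)} (hle : le ⊆ le') {g : PreGraph V A L}
    {u : V} {c : L} {ins : List L} {out : L}
    (h : IsConfiguration le g u c ins out) : IsConfiguration le' g u c ins out := by
  obtain ⟨h1, h2, h3, h4, h5, h6, ars, h7, h8, h9⟩ := h
  refine ⟨h1, h2, h3, h4, h5, ?_, ars, h7, h8, ?_⟩
  · intro a0 ha0 w hw
    obtain ⟨q1, σ, q2, q3⟩ := h6 a0 ha0 w hw
    exact ⟨q1, σ, q2, hle q3⟩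
  · intro i a τ hi hins
    obtain ⟨w, σ, q1, q2, q3⟩ := h9 i a τ hi hins
    exact ⟨w, σ, q1, q2, hle q3⟩

lemma config_out_unique {Ty : Set L} {le : Set (L × L)} {C : Set L}
    {sig : Set (L × (List L × L))} {h : PreGraph V A L}
    (hSG : IsStructureGraph Ty le C sig h) {u : V} (hu : u ∈ h.Cf)
    {a b : A} {wa wb : V} (ha : (a, (u, wa)) ∈ h.inc) (hb : (b, (u, wb)) ∈ h.inc) :
    a = b := by
  obtain ⟨c, ins, out, -, -, -, hcfg⟩ := hSG.2.2 u hu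
  obtain ⟨a0, -, huniq⟩ := hcfg.2.2.2.2.1
  have haArr : a ∈ h.Arr := hSG.1.2.1.1 _ ha
  have hbArr : b ∈ h.Arr := hSG.1.2.1.1 _ hb
  have hai : a ∈ h.incidentArrows u := ⟨haArr, wa, Or.inr ha⟩
  have hbi : b ∈ h.incidentArrows u := ⟨hbArr, wb, Or.inr hb⟩
  have h1 := huniq a ⟨Set.mem_inter haArr hai, wa, ha, hai⟩
  have h2 := huniq b ⟨Set.mem_inter hbArr hbi, wb, hb, hbi⟩
  rw [h1, h2]

lemma config_in_unique {Ty : Set L} {le : Set (L × L)} {C : Set L}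
    {sig : Set (L × (List L × L))} {h : PreGraph V A L}
    (hSG : IsStructureGraph Ty le C sig h) {u : V} (hu : u ∈ h.Cf)
    {a b : A} {va vb : V} {m : ℕ} (ha : (a, (va, u)) ∈ h.inc) (hb : (b, (vb, u)) ∈ h.inc)
    (hia : (a, m) ∈ h.ia) (hib : (b, m) ∈ h.ia) : a = b := by
  obtain ⟨c, ins, out, -, -, -, hcfg⟩ := hSG.2.2 u hu
  obtain ⟨ars, hseq, -, -⟩ := hcfg.2.2.2.2.2.2
  have haArr : a ∈ h.Arr := hSG.1.2.1.1 _ ha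
  have hbArr : b ∈ h.Arr := hSG.1.2.1.1 _ hb
  have hai : a ∈ h.incidentArrows u := ⟨haArr, va, Or.inl ha⟩
  have hbi : b ∈ h.incidentArrows u := ⟨hbArr, vb, Or.inl hb⟩
  have hamem : a ∈ ars := (hseq.2.1 a).mpr ⟨Set.mem_inter haArr hai, va, ha, hai⟩
  have hbmem : b ∈ ars := (hseq.2.1 b).mpr ⟨Set.mem_inter hbArr hbi, vb, hb, hbi⟩
  obtain ⟨i, hi, hieq⟩ := List.mem_iff_getElem.mp hamem
  obtain ⟨j, hj, hjeq⟩ := List.mem_iff_getElem.mp hbmem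
  have hia' := hseq.2.2 i a (by rw [List.getElem?_eq_getElem hi, hieq])
  have hib' := hseq.2.2 j b (by rw [List.getElem?_eq_getElem hj, hjeq])
  have e1 : i + 1 = m := funOn_unique hSG.1.2.2.2.1 hia'.1 hia
  have e2 : j + 1 = m := funOn_unique hSG.1.2.2.2.1 hib'.1 hib
  have hij : i = j := by omega
  subst hij
  rw [← hieq, ← hjeq]
theorem isCSpace_union3 {c1 c2 c3 : CSpace V A L}
    (h12 : IsCSpace (c1 ∪ c2)) (h13 : IsCSpace (c1 ∪ c3)) (h23 : IsCSpace (c2 ∪ c3)) :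
    IsCSpace (c1 ∪ (c2 ∪ c3)) := by
  obtain ⟨po12, dj12, sf12, scn12, SG12⟩ := h12
  obtain ⟨po13, dj13, sf13, scn13, SG13⟩ := h13
  obtain ⟨po23, dj23, sf23, scn23, SG23⟩ := h23
  simp only [union_Ty, union_le, union_C, union_sig, union_G] at po12 dj12 sf12 scn12 SG12 po13 dj13 sf13 scn13 SG13 po23 dj23 sf23 scn23 SG23
  have IG12 := SG12.1
  have IG13 := SG13.1
  have IG23 := SG23.1
  -- subset maps
  have mTy12 : c1.Ty ∪ c2.Ty ⊆ c1.Ty ∪ (c2.Ty ∪ c3.Ty) :=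
    Set.union_subset_union_right _ Set.subset_union_left
  have mTy13 : c1.Ty ∪ c3.Ty ⊆ c1.Ty ∪ (c2.Ty ∪ c3.Ty) :=
    Set.union_subset_union_right _ Set.subset_union_right
  have mC12 : c1.C ∪ c2.C ⊆ c1.C ∪ (c2.C ∪ c3.C) :=
    Set.union_subset_union_right _ Set.subset_union_left
  have mC23 : c2.C ∪ c3.C ⊆ c1.C ∪ (c2.C ∪ c3.C) := Set.subset_union_right
  have msig12 : c1.sig ∪ c2.sig ⊆ c1.sig ∪ (c2.sig ∪ c3.sig) :=
    Set.union_subset_union_right _ Set.subset_union_left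
  have msig13 : c1.sig ∪ c3.sig ⊆ c1.sig ∪ (c2.sig ∪ c3.sig) :=
    Set.union_subset_union_right _ Set.subset_union_right
  have msig23 : c2.sig ∪ c3.sig ⊆ c1.sig ∪ (c2.sig ∪ c3.sig) := Set.subset_union_right
  have mle12 : c1.le ∪ c2.le ⊆ c1.le ∪ (c2.le ∪ c3.le) :=
    Set.union_subset_union_right _ Set.subset_union_left
  have mle23 : c2.le ∪ c3.le ⊆ c1.le ∪ (c2.le ∪ c3.le) := Set.subset_union_right
  have sub12 : (c1.G ∪ c2.G).Subgraph (c1.G ∪ (c2.G ∪ c3.G)) := by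
    refine ⟨?_, ?_, ?_, ?_, ?_, ?_, ?_⟩ <;>
      exact Set.union_subset_union_right _ Set.subset_union_left
  have sub13 : (c1.G ∪ c3.G).Subgraph (c1.G ∪ (c2.G ∪ c3.G)) := by
    refine ⟨?_, ?_, ?_, ?_, ?_, ?_, ?_⟩ <;>
      exact Set.union_subset_union_right _ Set.subset_union_right
  have sub23 : (c2.G ∪ c3.G).Subgraph (c1.G ∪ (c2.G ∪ c3.G)) := by
    refine ⟨?_, ?_, ?_, ?_, ?_, ?_, ?_⟩ <;> exact Set.subset_union_right
  -- triple graph facts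
  have disjTC : Disjoint (c1.G ∪ (c2.G ∪ c3.G)).Tk (c1.G ∪ (c2.G ∪ c3.G)).Cf :=
    disjoint_union3 IG12.1 IG13.1 IG23.1
  have incF : IsFunctionOn (c1.G ∪ (c2.G ∪ c3.G)).inc (c1.G ∪ (c2.G ∪ c3.G)).Arr :=
    isFunctionOn_union3 IG12.2.1 IG13.2.1 IG23.2.1
  have iaF : IsFunctionOn (c1.G ∪ (c2.G ∪ c3.G)).ia (c1.G ∪ (c2.G ∪ c3.G)).Arr :=
    isFunctionOn_union3 IG12.2.2.2.1 IG13.2.2.2.1 IG23.2.2.2.1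
  have tlF : IsFunctionOn (c1.G ∪ (c2.G ∪ c3.G)).tl (c1.G ∪ (c2.G ∪ c3.G)).Tk :=
    isFunctionOn_union3 IG12.2.2.2.2.1 IG13.2.2.2.2.1 IG23.2.2.2.2.1
  have clF : IsFunctionOn (c1.G ∪ (c2.G ∪ c3.G)).cl (c1.G ∪ (c2.G ∪ c3.G)).Cf :=
    isFunctionOn_union3 IG12.2.2.2.2.2 IG13.2.2.2.2.2 IG23.2.2.2.2.2
  have sigF3 : IsFunctionOn (c1.sig ∪ (c2.sig ∪ c3.sig)) (c1.C ∪ (c2.C ∪ c3.C)) :=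
    isFunctionOn_union3 sf12 sf13 sf23
  have ends : ∀ (a : A) (v w : V), (a, (v, w)) ∈ (c1.G ∪ (c2.G ∪ c3.G)).inc →
      (v ∈ (c1.G ∪ (c2.G ∪ c3.G)).Tk ∧ w ∈ (c1.G ∪ (c2.G ∪ c3.G)).Cf) ∨
      (v ∈ (c1.G ∪ (c2.G ∪ c3.G)).Cf ∧ w ∈ (c1.G ∪ (c2.G ∪ c3.G)).Tk) := by
    rintro a v w (h | h | h)
    · rcases IG12.2.2.1 a v w (Or.inl h) with ⟨h1, h2⟩ | ⟨h1, h2⟩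
      exacts [Or.inl ⟨sub12.1 h1, sub12.2.1 h2⟩, Or.inr ⟨sub12.2.1 h1, sub12.1 h2⟩]
    · rcases IG12.2.2.1 a v w (Or.inr h) with ⟨h1, h2⟩ | ⟨h1, h2⟩
      exacts [Or.inl ⟨sub12.1 h1, sub12.2.1 h2⟩, Or.inr ⟨sub12.2.1 h1, sub12.1 h2⟩]
    · rcases IG13.2.2.1 a v w (Or.inr h) with ⟨h1, h2⟩ | ⟨h1, h2⟩
      exacts [Or.inl ⟨sub13.1 h1, sub13.2.1 h2⟩, Or.inr ⟨sub13.2.1 h1, sub13.1 h2⟩]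
  -- side analysis
  have sideOut : ∀ (H : PreGraph V A L), IsGraph H → H.Subgraph (c1.G ∪ (c2.G ∪ c3.G)) →
      ∀ (a : A) (u w : V), u ∈ (c1.G ∪ (c2.G ∪ c3.G)).Cf → (a, (u, w)) ∈ H.inc →
      u ∈ H.Cf ∧ w ∈ H.Tk := by
    intro H hIG hsub a u w hu hinc
    rcases hIG.2.2.1 a u w hinc with ⟨h1, h2⟩ | ⟨h1, h2⟩
    · exact absurd hu (Set.disjoint_left.mp disjTC (hsub.1 h1))
    · exact ⟨h1, h2⟩
  have sideIn : ∀ (H : PreGraph V A L), IsGraph H → H.Subgraph (c1.G ∪ (c2.G ∪ c3.G)) →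
      ∀ (a : A) (u w : V), u ∈ (c1.G ∪ (c2.G ∪ c3.G)).Cf → (a, (w, u)) ∈ H.inc →
      u ∈ H.Cf ∧ w ∈ H.Tk := by
    intro H hIG hsub a u w hu hinc
    rcases hIG.2.2.1 a w u hinc with ⟨h1, h2⟩ | ⟨h1, h2⟩
    · exact ⟨h2, h1⟩
    · exact absurd hu (Set.disjoint_left.mp disjTC (hsub.1 h2))
  have iaLoc : ∀ (H : PreGraph V A L), IsGraph H → H.Subgraph (c1.G ∪ (c2.G ∪ c3.G)) →
      ∀ (a : A) (m : ℕ), a ∈ H.Arr → (a, m) ∈ (c1.G ∪ (c2.G ∪ c3.G)).ia → (a, m) ∈ H.ia := by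
    intro H hIG hsub a m haArr hia
    obtain ⟨m', hm', -⟩ := hIG.2.2.2.1.2 a haArr
    have : m' = m := funOn_unique iaF (hsub.2.2.2.2.1 hm') hia
    rwa [this] at hm'
  -- global uniqueness of the output arrow
  have GUout : ∀ u, u ∈ (c1.G ∪ (c2.G ∪ c3.G)).Cf → ∀ (a b : A) (wa wb : V),
      (a, (u, wa)) ∈ (c1.G ∪ (c2.G ∪ c3.G)).inc →
      (b, (u, wb)) ∈ (c1.G ∪ (c2.G ∪ c3.G)).inc → a = b := by
    intro u hu a b wa wb ha hb
    have core : ∀ (Ty' : Set L) (le' : Set (L × L)) (C' : Set L)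
        (sig' : Set (L × (List L × L))) (H : PreGraph V A L),
        IsStructureGraph Ty' le' C' sig' H → H.Subgraph (c1.G ∪ (c2.G ∪ c3.G)) →
        (a, (u, wa)) ∈ H.inc → (b, (u, wb)) ∈ H.inc → a = b := by
      intro Ty' le' C' sig' H hSG hsub ha' hb'
      exact config_out_unique hSG (sideOut _ hSG.1 hsub a u wa hu ha').1 ha' hb'
    rcases ha with h | h | h <;> rcases hb with h' | h' | h'
    · exact core _ _ _ _ _ SG12 sub12 (Or.inl h) (Or.inl h')
    · exact core _ _ _ _ _ SG12 sub12 (Or.inl h) (Or.inr h')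
    · exact core _ _ _ _ _ SG13 sub13 (Or.inl h) (Or.inr h')
    · exact core _ _ _ _ _ SG12 sub12 (Or.inr h) (Or.inl h')
    · exact core _ _ _ _ _ SG12 sub12 (Or.inr h) (Or.inr h')
    · exact core _ _ _ _ _ SG23 sub23 (Or.inl h) (Or.inr h')
    · exact core _ _ _ _ _ SG13 sub13 (Or.inr h) (Or.inl h')
    · exact core _ _ _ _ _ SG23 sub23 (Or.inr h) (Or.inl h')
    · exact core _ _ _ _ _ SG13 sub13 (Or.inr h) (Or.inr h')
  -- global uniqueness of input arrows with equal index
  have GUin : ∀ u, u ∈ (c1.G ∪ (c2.G ∪ c3.G)).Cf → ∀ (a b : A) (va vb : V) (m : ℕ),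
      (a, (va, u)) ∈ (c1.G ∪ (c2.G ∪ c3.G)).inc →
      (b, (vb, u)) ∈ (c1.G ∪ (c2.G ∪ c3.G)).inc →
      (a, m) ∈ (c1.G ∪ (c2.G ∪ c3.G)).ia → (b, m) ∈ (c1.G ∪ (c2.G ∪ c3.G)).ia → a = b := by
    intro u hu a b va vb m ha hb hia hib
    have core : ∀ (Ty' : Set L) (le' : Set (L × L)) (C' : Set L)
        (sig' : Set (L × (List L × L))) (H : PreGraph V A L),
        IsStructureGraph Ty' le' C' sig' H → H.Subgraph (c1.G ∪ (c2.G ∪ c3.G)) →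
        (a, (va, u)) ∈ H.inc → (b, (vb, u)) ∈ H.inc → a = b := by
      intro Ty' le' C' sig' H hSG hsub ha' hb'
      exact config_in_unique hSG (sideIn _ hSG.1 hsub a u va hu ha').1 ha' hb'
        (iaLoc _ hSG.1 hsub a m (hSG.1.2.1.1 _ ha') hia)
        (iaLoc _ hSG.1 hsub b m (hSG.1.2.1.1 _ hb') hib)
    rcases ha with h | h | h <;> rcases hb with h' | h' | h'
    · exact core _ _ _ _ _ SG12 sub12 (Or.inl h) (Or.inl h')
    · exact core _ _ _ _ _ SG12 sub12 (Or.inl h) (Or.inr h')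
    · exact core _ _ _ _ _ SG13 sub13 (Or.inl h) (Or.inr h')
    · exact core _ _ _ _ _ SG12 sub12 (Or.inr h) (Or.inl h')
    · exact core _ _ _ _ _ SG12 sub12 (Or.inr h) (Or.inr h')
    · exact core _ _ _ _ _ SG23 sub23 (Or.inl h) (Or.inr h')
    · exact core _ _ _ _ _ SG13 sub13 (Or.inr h) (Or.inl h')
    · exact core _ _ _ _ _ SG23 sub23 (Or.inr h) (Or.inl h')
    · exact core _ _ _ _ _ SG13 sub13 (Or.inr h) (Or.inr h')
  -- input arrows have a signature-bounded index
  have inIndexH : ∀ (Ty' : Set L) (le' : Set (L × L)) (C' : Set L)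
      (sig' : Set (L × (List L × L))) (H : PreGraph V A L),
      IsStructureGraph Ty' le' C' sig' H → H.Subgraph (c1.G ∪ (c2.G ∪ c3.G)) →
      sig' ⊆ c1.sig ∪ (c2.sig ∪ c3.sig) →
      ∀ u, u ∈ (c1.G ∪ (c2.G ∪ c3.G)).Cf → ∀ (a : A) (va : V), (a, (va, u)) ∈ H.inc →
      ∃ c ins out i, (u, c) ∈ (c1.G ∪ (c2.G ∪ c3.G)).cl ∧
        (c, (ins, out)) ∈ c1.sig ∪ (c2.sig ∪ c3.sig) ∧
        i < ins.length ∧ (a, i + 1) ∈ (c1.G ∪ (c2.G ∪ c3.G)).ia := by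
    intro Ty' le' C' sig' H hSG hsub hsig u hu a va hinc
    have huH : u ∈ H.Cf := (sideIn _ hSG.1 hsub a u va hu hinc).1
    obtain ⟨c, ins, out, hcl, -, hcsig, hcfg⟩ := hSG.2.2 u huH
    obtain ⟨ars, hseq, hlen, -⟩ := hcfg.2.2.2.2.2.2
    have haArr : a ∈ H.Arr := hSG.1.2.1.1 _ hinc
    have hai : a ∈ H.incidentArrows u := ⟨haArr, va, Or.inl hinc⟩
    have hamem : a ∈ ars := (hseq.2.1 a).mpr ⟨Set.mem_inter haArr hai, va, hinc, hai⟩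
    obtain ⟨i, hi, hieq⟩ := List.mem_iff_getElem.mp hamem
    have hia' := hseq.2.2 i a (by rw [List.getElem?_eq_getElem hi, hieq])
    exact ⟨c, ins, out, i, hsub.2.2.2.2.2.2 hcl, hsig hcsig, hlen ▸ hi,
      hsub.2.2.2.2.1 hia'.1⟩
  have inIndex : ∀ u, u ∈ (c1.G ∪ (c2.G ∪ c3.G)).Cf → ∀ (a : A) (va : V),
      (a, (va, u)) ∈ (c1.G ∪ (c2.G ∪ c3.G)).inc →
      ∃ c ins out i, (u, c) ∈ (c1.G ∪ (c2.G ∪ c3.G)).cl ∧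
        (c, (ins, out)) ∈ c1.sig ∪ (c2.sig ∪ c3.sig) ∧
        i < ins.length ∧ (a, i + 1) ∈ (c1.G ∪ (c2.G ∪ c3.G)).ia := by
    intro u hu a va ha
    rcases ha with h | h | h
    · exact inIndexH _ _ _ _ _ SG12 sub12 msig12 u hu a va (Or.inl h)
    · exact inIndexH _ _ _ _ _ SG12 sub12 msig12 u hu a va (Or.inr h)
    · exact inIndexH _ _ _ _ _ SG13 sub13 msig13 u hu a va (Or.inr h)
  -- the key neighbourhood argument
  have key : ∀ (Ty' : Set L) (le' : Set (L × L)) (C' : Set L)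
      (sig' : Set (L × (List L × L))) (H : PreGraph V A L),
      IsStructureGraph Ty' le' C' sig' H → H.Subgraph (c1.G ∪ (c2.G ∪ c3.G)) →
      C' ⊆ c1.C ∪ (c2.C ∪ c3.C) → sig' ⊆ c1.sig ∪ (c2.sig ∪ c3.sig) →
      le' ⊆ c1.le ∪ (c2.le ∪ c3.le) →
      ∀ u, u ∈ (c1.G ∪ (c2.G ∪ c3.G)).Cf → u ∈ H.Cf →
      ∃ c ins out, (u, c) ∈ (c1.G ∪ (c2.G ∪ c3.G)).cl ∧ c ∈ c1.C ∪ (c2.C ∪ c3.C) ∧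
        (c, (ins, out)) ∈ c1.sig ∪ (c2.sig ∪ c3.sig) ∧
        IsConfiguration (c1.le ∪ (c2.le ∪ c3.le)) ((c1.G ∪ (c2.G ∪ c3.G)).Nh u) u c ins out := by
    intro Ty' le' C' sig' H hSG hsub hC hsig hle u hu huH
    have hIG := hSG.1
    obtain ⟨c, ins, out, hcl, hcC, hcsig, hcfg⟩ := hSG.2.2 u huH
    have arrEq : (c1.G ∪ (c2.G ∪ c3.G)).incidentArrows u = H.incidentArrows u := by
      apply Set.Subset.antisymm
      · rintro a ⟨haArr, v, hv | hv⟩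
        · obtain ⟨c', ins', out', i, hcl', hsig', hi, hiaG⟩ := inIndex u hu a v hv
          have hc : c' = c := funOn_unique clF hcl' (hsub.2.2.2.2.2.2 hcl)
          subst hc
          have hio : (ins', out') = (ins, out) := funOn_unique sigF3 hsig' (hsig hcsig)
          have hins : ins' = ins := congrArg Prod.fst hio
          obtain ⟨ars, hseq, hlen, -⟩ := hcfg.2.2.2.2.2.2
          have hilen : i < ars.length := by rw [hlen, ← hins]; exact hi
          have hbq : ars[i]? = some ars[i] := List.getElem?_eq_getElem hilen
          have hbia : (ars[i], i + 1) ∈ H.ia := (hseq.2.2 i ars[i] hbq).1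
          have hbmem : ars[i] ∈ ars := List.getElem_mem hilen
          obtain ⟨hbArr, w, hbinc⟩ := (hseq.2.1 ars[i]).mp hbmem
          have hab : a = ars[i] := GUin u hu a ars[i] v w (i + 1) hv
            (hsub.2.2.2.1 hbinc.1) hiaG (hsub.2.2.2.2.1 hbia)
          rw [hab]
          exact hbArr.2
        · obtain ⟨a0, ha0, -⟩ := hcfg.2.2.2.2.1
          obtain ⟨ha0Arr, w0, ha0inc⟩ := ha0
          have hab : a = a0 := GUout u hu a a0 v w0 hv (hsub.2.2.2.1 ha0inc.1)
          rw [hab]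
          exact ha0Arr.2
      · rintro a ⟨haArr, v, hv | hv⟩
        · exact ⟨hsub.2.2.1 haArr, v, Or.inl (hsub.2.2.2.1 hv)⟩
        · exact ⟨hsub.2.2.1 haArr, v, Or.inr (hsub.2.2.2.1 hv)⟩
    have adjEq : (c1.G ∪ (c2.G ∪ c3.G)).adjTo u = H.adjTo u := by
      apply Set.Subset.antisymm
      · rintro v (rfl | ⟨a, haArr, hv | hv⟩)
        · exact Or.inl rfl
        · have hai : a ∈ H.incidentArrows u := by
            rw [← arrEq]; exact ⟨haArr, v, Or.inl hv⟩
          obtain ⟨haH, w, hw | hw⟩ := hai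
          · have he : ((v, u) : V × V) = (w, u) := funOn_unique incF hv (hsub.2.2.2.1 hw)
            have hvw : v = w := congrArg Prod.fst he
            subst hvw
            exact Or.inr ⟨a, haH, Or.inl hw⟩
          · have he : ((v, u) : V × V) = (u, w) := funOn_unique incF hv (hsub.2.2.2.1 hw)
            exact Or.inl (congrArg Prod.fst he)
        · have hai : a ∈ H.incidentArrows u := by
            rw [← arrEq]; exact ⟨haArr, v, Or.inr hv⟩
          obtain ⟨haH, w, hw | hw⟩ := hai
          · have he : ((u, v) : V × V) = (w, u) := funOn_unique incF hv (hsub.2.2.2.1 hw)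
            exact Or.inl (congrArg Prod.snd he)
          · have he : ((u, v) : V × V) = (u, w) := funOn_unique incF hv (hsub.2.2.2.1 hw)
            have hvw : v = w := congrArg Prod.snd he
            subst hvw
            exact Or.inr ⟨a, haH, Or.inr hw⟩
      · rintro v (rfl | ⟨a, haArr, hv | hv⟩)
        · exact Or.inl rfl
        · exact Or.inr ⟨a, hsub.2.2.1 haArr, Or.inl (hsub.2.2.2.1 hv)⟩
        · exact Or.inr ⟨a, hsub.2.2.1 haArr, Or.inr (hsub.2.2.2.1 hv)⟩
    have NhEq : (c1.G ∪ (c2.G ∪ c3.G)).Nh u = H.Nh u := by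
      have hTk : (c1.G ∪ (c2.G ∪ c3.G)).Tk ∩ (c1.G ∪ (c2.G ∪ c3.G)).adjTo u =
          H.Tk ∩ H.adjTo u := by
        apply Set.Subset.antisymm
        · rintro x ⟨hxTk, hadj⟩
          rw [adjEq] at hadj
          rcases hadj with hxu | ⟨a, haArr, hv | hv⟩
          · have hxu' : x = u := hxu
            exact absurd hu (Set.disjoint_left.mp disjTC (hxu' ▸ hxTk))
          · exact ⟨(sideIn _ hIG hsub a u x hu hv).2, Or.inr ⟨a, haArr, Or.inl hv⟩⟩
          · exact ⟨(sideOut _ hIG hsub a u x hu hv).2, Or.inr ⟨a, haArr, Or.inr hv⟩⟩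
        · rintro x ⟨hxTk, hadj⟩
          exact ⟨hsub.1 hxTk, by rw [adjEq]; exact hadj⟩
      have hCf : (c1.G ∪ (c2.G ∪ c3.G)).Cf ∩ (c1.G ∪ (c2.G ∪ c3.G)).adjTo u =
          H.Cf ∩ H.adjTo u := by
        apply Set.Subset.antisymm
        · rintro x ⟨hxCf, hadj⟩
          rw [adjEq] at hadj
          rcases hadj with hxu | ⟨a, haArr, hv | hv⟩
          · have hxu' : x = u := hxu
            subst hxu'
            exact ⟨huH, Or.inl rfl⟩
          · exact ((Set.disjoint_left.mp disjTC
              (hsub.1 (sideIn _ hIG hsub a u x hu hv).2)) hxCf).elim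
          · exact ((Set.disjoint_left.mp disjTC
              (hsub.1 (sideOut _ hIG hsub a u x hu hv).2)) hxCf).elim
        · rintro x ⟨hxCf, hadj⟩
          exact ⟨hsub.2.1 hxCf, by rw [adjEq]; exact hadj⟩
      have hArr : (c1.G ∪ (c2.G ∪ c3.G)).Arr ∩ (c1.G ∪ (c2.G ∪ c3.G)).incidentArrows u =
          H.Arr ∩ H.incidentArrows u := by
        apply Set.Subset.antisymm
        · rintro a ⟨-, hinc⟩
          rw [arrEq] at hinc
          exact ⟨hinc.1, hinc⟩
        · rintro a ⟨haArr, hinc⟩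
          exact ⟨hsub.2.2.1 haArr, by rw [arrEq]; exact hinc⟩
      have hinc' : {q | q ∈ (c1.G ∪ (c2.G ∪ c3.G)).inc ∧
          q.1 ∈ (c1.G ∪ (c2.G ∪ c3.G)).incidentArrows u} =
          {q | q ∈ H.inc ∧ q.1 ∈ H.incidentArrows u} := by
        apply Set.Subset.antisymm
        · rintro ⟨a, p⟩ ⟨hq, hmem⟩
          rw [arrEq] at hmem
          obtain ⟨haH, v, hv⟩ := hmem
          rcases hv with hv | hv
          · have he : p = (v, u) := funOn_unique incF hq (hsub.2.2.2.1 hv)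
            subst he
            exact ⟨hv, haH, v, Or.inl hv⟩
          · have he : p = (u, v) := funOn_unique incF hq (hsub.2.2.2.1 hv)
            subst he
            exact ⟨hv, haH, v, Or.inr hv⟩
        · rintro ⟨a, p⟩ ⟨hq, hmem⟩
          exact ⟨hsub.2.2.2.1 hq, by rw [arrEq]; exact hmem⟩
      have hia' : {q | q ∈ (c1.G ∪ (c2.G ∪ c3.G)).ia ∧
          q.1 ∈ (c1.G ∪ (c2.G ∪ c3.G)).incidentArrows u} =
          {q | q ∈ H.ia ∧ q.1 ∈ H.incidentArrows u} := by
        apply Set.Subset.antisymm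
        · rintro ⟨a, m⟩ ⟨hq, hmem⟩
          rw [arrEq] at hmem
          exact ⟨iaLoc _ hIG hsub a m hmem.1 hq, hmem⟩
        · rintro ⟨a, m⟩ ⟨hq, hmem⟩
          exact ⟨hsub.2.2.2.2.1 hq, by rw [arrEq]; exact hmem⟩
      have htl' : {q | q ∈ (c1.G ∪ (c2.G ∪ c3.G)).tl ∧
          q.1 ∈ (c1.G ∪ (c2.G ∪ c3.G)).adjTo u} =
          {q | q ∈ H.tl ∧ q.1 ∈ H.adjTo u} := by
        apply Set.Subset.antisymm
        · rintro ⟨x, τ⟩ ⟨hq, hadj⟩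
          rw [adjEq] at hadj
          have hxTk : x ∈ (c1.G ∪ (c2.G ∪ c3.G)).Tk := tlF.1 _ hq
          rcases hadj with hxu | ⟨a, haArr, hv | hv⟩
          · have hxu' : x = u := hxu
            exact absurd hu (Set.disjoint_left.mp disjTC (hxu' ▸ hxTk))
          · have hxH : x ∈ H.Tk := (sideIn _ hIG hsub a u x hu hv).2
            obtain ⟨τ', hτ', -⟩ := hIG.2.2.2.2.1.2 x hxH
            have hττ : τ' = τ := funOn_unique tlF (hsub.2.2.2.2.2.1 hτ') hq
            exact ⟨hττ ▸ hτ', Or.inr ⟨a, haArr, Or.inl hv⟩⟩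
          · have hxH : x ∈ H.Tk := (sideOut _ hIG hsub a u x hu hv).2
            obtain ⟨τ', hτ', -⟩ := hIG.2.2.2.2.1.2 x hxH
            have hττ : τ' = τ := funOn_unique tlF (hsub.2.2.2.2.2.1 hτ') hq
            exact ⟨hττ ▸ hτ', Or.inr ⟨a, haArr, Or.inr hv⟩⟩
        · rintro ⟨x, τ⟩ ⟨hq, hadj⟩
          exact ⟨hsub.2.2.2.2.2.1 hq, by rw [adjEq]; exact hadj⟩
      have hcl' : {q | q ∈ (c1.G ∪ (c2.G ∪ c3.G)).cl ∧
          q.1 ∈ (c1.G ∪ (c2.G ∪ c3.G)).adjTo u} =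
          {q | q ∈ H.cl ∧ q.1 ∈ H.adjTo u} := by
        apply Set.Subset.antisymm
        · rintro ⟨x, d⟩ ⟨hq, hadj⟩
          rw [adjEq] at hadj
          have hxCf : x ∈ (c1.G ∪ (c2.G ∪ c3.G)).Cf := clF.1 _ hq
          rcases hadj with hxu | ⟨a, haArr, hv | hv⟩
          · have hxu' : x = u := hxu
            subst hxu'
            obtain ⟨d', hd', -⟩ := hIG.2.2.2.2.2.2 x huH
            have hdd : d' = d := funOn_unique clF (hsub.2.2.2.2.2.2 hd') hq
            exact ⟨hdd ▸ hd', Or.inl rfl⟩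
          · exact ((Set.disjoint_left.mp disjTC
              (hsub.1 (sideIn _ hIG hsub a u x hu hv).2)) hxCf).elim
          · exact ((Set.disjoint_left.mp disjTC
              (hsub.1 (sideOut _ hIG hsub a u x hu hv).2)) hxCf).elim
        · rintro ⟨x, d⟩ ⟨hq, hadj⟩
          exact ⟨hsub.2.2.2.2.2.2 hq, by rw [adjEq]; exact hadj⟩
      exact PreGraph.ext' hTk hCf hArr hinc' hia' htl' hcl'
    refine ⟨c, ins, out, hsub.2.2.2.2.2.2 hcl, hC hcC, hsig hcsig, ?_⟩
    rw [NhEq]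
    exact isConfiguration_mono hle hcfg
  have structCond : ∀ u ∈ (c1.G ∪ (c2.G ∪ c3.G)).Cf,
      ∃ c ins out, (u, c) ∈ (c1.G ∪ (c2.G ∪ c3.G)).cl ∧ c ∈ c1.C ∪ (c2.C ∪ c3.C) ∧
        (c, (ins, out)) ∈ c1.sig ∪ (c2.sig ∪ c3.sig) ∧
        IsConfiguration (c1.le ∪ (c2.le ∪ c3.le)) ((c1.G ∪ (c2.G ∪ c3.G)).Nh u) u c ins out := by
    intro u hu
    rcases hu with h | h | h
    · exact key _ _ _ _ _ SG12 sub12 mC12 msig12 mle12 u (Or.inl h) (Or.inl h)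
    · exact key _ _ _ _ _ SG12 sub12 mC12 msig12 mle12 u (Or.inr (Or.inl h)) (Or.inr h)
    · exact key _ _ _ _ _ SG23 sub23 mC23 msig23 mle23 u (Or.inr (Or.inr h)) (Or.inr h)
  have tlTy : ∀ (x : V) (τ : L), (x, τ) ∈ (c1.G ∪ (c2.G ∪ c3.G)).tl →
      τ ∈ c1.Ty ∪ (c2.Ty ∪ c3.Ty) := by
    intro x τ hx
    rcases hx with h | h | h
    · exact mTy12 (SG12.2.1 x τ (Or.inl h))
    · exact mTy12 (SG12.2.1 x τ (Or.inr h))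
    · exact mTy13 (SG13.2.1 x τ (Or.inr h))
  have sigCond : ∀ (c : L) (ins : List L) (out : L),
      (c, (ins, out)) ∈ c1.sig ∪ (c2.sig ∪ c3.sig) →
      ins ≠ [] ∧ (∀ τ ∈ ins, τ ∈ c1.Ty ∪ (c2.Ty ∪ c3.Ty)) ∧
        out ∈ c1.Ty ∪ (c2.Ty ∪ c3.Ty) := by
    rintro c ins out (h | h | h)
    · obtain ⟨q1, q2, q3⟩ := scn12 c ins out (Or.inl h)
      exact ⟨q1, fun τ hτ => mTy12 (q2 τ hτ), mTy12 q3⟩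
    · obtain ⟨q1, q2, q3⟩ := scn12 c ins out (Or.inr h)
      exact ⟨q1, fun τ hτ => mTy12 (q2 τ hτ), mTy12 q3⟩
    · obtain ⟨q1, q2, q3⟩ := scn13 c ins out (Or.inr h)
      exact ⟨q1, fun τ hτ => mTy13 (q2 τ hτ), mTy13 q3⟩
  exact ⟨isPartialOrderOn_union3 po12 po13 po23, disjoint_union3 dj12 dj13 dj23,
    sigF3, sigCond, ⟨disjTC, incF, ends, iaF, tlF, clF⟩, tlTy, structCond⟩

/-- an inter-representational-system encoding yields a representational system. -/
theorem irse_yields_rsystem {V A L : Type*}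
    (R R' : RSystem V A L) (Is'' : CSpace V A L)
    (Ty MTy Ty' MTy' MTy'' : Set L) (le Mle le' Mle' Mle'' : Set (L × L))
    (hE : IsIRSE R R' Is'' Ty le MTy Mle Ty' le' MTy' Mle' MTy'' Mle'') :
    IsRSystem ⟨R.Gs ∪ R'.Gs, R.Es ∪ R'.Es, (R.Is ∪ R'.Is) ∪ Is''⟩
      (Ty ∪ Ty') (le ∪ le') MTy'' Mle'' := by
  obtain ⟨hR, hR', hRR', hPOm, hPOall, hTy'', hle'', hIsc'', hMsub, hMlesub, htok'', hout'',
    hGsI, hEsI, hIsI, hdC1, hdC2, hdC3⟩ := hE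
  obtain ⟨q1, q2, q3, q4, q5, q6, q7, q8, q9, q10, q11, q12, q13, q14, q15, q16, q17, q18,
    q19, q20, q21, q22⟩ := hRR'
  refine ⟨q1, hPOm, hPOall, q4, q5, q6, q7, q8, q9, q10, q11, ?_, ?_, hIsI, ?_, ?_, q17,
    ?_, ?_, q20, ?_, ?_⟩
  · -- Is.Ty
    show (R.Is ∪ R'.Is).Ty ∪ Is''.Ty = (Ty ∪ Ty') ∪ MTy''
    rw [show (R.Is ∪ R'.Is).Ty = (Ty ∪ Ty') ∪ (MTy ∪ MTy') from q12, hTy'']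
    apply Set.Subset.antisymm
    · exact Set.union_subset (Set.union_subset_union_right _ hMsub) subset_rfl
    · exact Set.subset_union_right
  · -- Is.le
    show (R.Is ∪ R'.Is).le ∪ Is''.le = (le ∪ le') ∪ Mle''
    rw [show (R.Is ∪ R'.Is).le = (le ∪ le') ∪ (Mle ∪ Mle') from q13, hle'']
    apply Set.Subset.antisymm
    · exact Set.union_subset (Set.union_subset_union_right _ hMlesub) subset_rfl
    · exact Set.subset_union_right
  · -- meta-token condition
    rintro x (hx | hx) hxn
    · obtain ⟨τ, hτ, htl⟩ := q15 x hx hxn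
      exact ⟨τ, hMsub hτ, Or.inl htl⟩
    · obtain ⟨τ, hτ, htl⟩ := htok'' x hx hxn
      exact ⟨τ, hτ, Or.inr htl⟩
  · -- output condition
    rintro x hx ⟨u, hu, a, haArr, hainc⟩
    have disjIs : Disjoint (((R.Is ∪ R'.Is) ∪ Is'').G.Tk) (((R.Is ∪ R'.Is) ∪ Is'').G.Cf) :=
      hIsI.2.2.2.2.1.1
    rcases hainc with h | h
    · have hIGp : IsGraph (R.Is ∪ R'.Is).G := q14.2.2.2.2.1
      rcases hIGp.2.2.1 a u x h with ⟨h1, h2⟩ | ⟨h1, h2⟩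
      · exact absurd hu (Set.disjoint_left.mp disjIs (Or.inl h1))
      · exact q16 x h2 ⟨u, h1, a, hIGp.2.1.1 _ h, h⟩
    · have hIG'' : IsGraph Is''.G := hIsc''.2.2.2.2.1
      rcases hIG''.2.2.1 a u x h with ⟨h1, h2⟩ | ⟨h1, h2⟩
      · exact absurd hu (Set.disjoint_left.mp disjIs (Or.inr h1))
      · exact hout'' x h2 ⟨u, h1, a, hIG''.2.1.1 _ h, h⟩
  · -- Gs ∪ Is
    exact isCSpace_union3 q18 hGsI hIsI
  · -- Es ∪ Is
    exact isCSpace_union3 q19 hEsI hIsI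
  · -- Gs.C vs Is.C
    show Disjoint (R.Gs ∪ R'.Gs).C ((R.Is ∪ R'.Is).C ∪ Is''.C)
    exact Set.disjoint_union_right.mpr ⟨q21, hdC1.symm⟩
  · -- Es.C vs Is.C
    show Disjoint (R.Es ∪ R'.Es).C ((R.Is ∪ R'.Is).C ∪ Is''.C)
    exact Set.disjoint_union_right.mpr ⟨q22, hdC2.symm⟩
end RST
end

section
/- Let (g, t) be a construction containing a well-formed trail tr with target t. Then for every trail tr′ occurring in the trail extension sequence TES(tr): (1) tr′ ⊕ tr is a non-extendable trail that targets t, and (2) tr′ is well-formed. -/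
namespace RST

variable {V A L : Type*}

/-- Every arrow in a chain is an arrow of the graph. -/
private lemma chain_mem_arr {V A L : Type*} {g : PreGraph V A L} :
    ∀ {l : List A} {s t : V}, ChainIn g l s t → ∀ b ∈ l, b ∈ g.Arr := by
  intro l
  induction l with
  | nil => intro s t _ b hb; cases hb
  | cons c rest ih =>
    intro s t hch b hb
    obtain ⟨hc, m, _, hrest⟩ := hch
    rcases List.mem_cons.mp hb with rfl | hb
    · exact hc
    · exact ih hrest b hb

/-- If an arrow of a chain has target `m`, then either `m` is the chain's target or some
arrow of the chain departs from `m`. -/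
private lemma chain_next {V A L : Type*} {g : PreGraph V A L}
    (hfun : IsFunctionOn g.inc g.Arr) :
    ∀ {l : List A} {s t : V} {ai : A} {x m : V},
      ChainIn g l s t → ai ∈ l → (ai, (x, m)) ∈ g.inc →
      m = t ∨ ∃ b ∈ l, ∃ z, (b, (m, z)) ∈ g.inc := by
  intro l
  induction l with
  | nil => intro s t ai x m _ h; cases h
  | cons c rest ih =>
    intro s t ai x m hch hmem hai
    obtain ⟨hcArr, m', hcm', hrest⟩ := hch
    rcases List.mem_cons.mp hmem with rfl | hmem
    · obtain ⟨y, -, hy⟩ := hfun.2 ai hcArr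
      have hpair : ((x, m) : V × V) = (s, m') := (hy _ hai).trans (hy _ hcm').symm
      have hm : m = m' := (Prod.mk.injEq _ _ _ _ ▸ hpair).2
      subst hm
      cases rest with
      | nil => exact Or.inl hrest
      | cons b rest' =>
        obtain ⟨hbArr, z, hbz, -⟩ := hrest
        exact Or.inr ⟨b, List.mem_cons_of_mem _ List.mem_cons_self, z, hbz⟩
    · rcases ih hrest hmem hai with h | ⟨b, hb, z, hz⟩
      · exact Or.inl h
      · exact Or.inr ⟨b, List.mem_cons_of_mem _ hb, z, hz⟩

/-- A configurator of a structure graph has a unique outgoing arrow. -/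
private lemma unique_out {V A L : Type*} {Ty : Set L} {le : Set (L × L)} {C : Set L}
    {sig : Set (L × (List L × L))} {g : PreGraph V A L}
    (hsg : IsStructureGraph Ty le C sig g) {u : V} (hu : u ∈ g.Cf) :
    ∀ a b : A, ∀ w w' : V, a ∈ g.Arr → b ∈ g.Arr →
      (a, (u, w)) ∈ g.inc → (b, (u, w')) ∈ g.inc → a = b := by
  intro a b w w' ha hb haw hbw
  obtain ⟨-, -, hcfg⟩ := hsg
  obtain ⟨c, ins, out, -, -, -, hconf⟩ := hcfg u hu
  obtain ⟨-, -, -, -, hout, -⟩ := hconf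
  obtain ⟨a0, -, huniq⟩ := hout
  have hAa : a ∈ (g.Nh u).Arr := ⟨ha, ha, w, Or.inr haw⟩
  have hAb : b ∈ (g.Nh u).Arr := ⟨hb, hb, w', Or.inr hbw⟩
  have hIa : (a, (u, w)) ∈ (g.Nh u).inc := ⟨haw, ha, w, Or.inr haw⟩
  have hIb : (b, (u, w')) ∈ (g.Nh u).inc := ⟨hbw, hb, w', Or.inr hbw⟩
  have h1 : a = a0 := huniq a ⟨hAa, w, hIa⟩
  have h2 : b = a0 := huniq b ⟨hAb, w', hIb⟩
  rw [h1, h2]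

/-- every trail in the trail extension sequence of a well-formed trail targeting
the construct extends it to a non-extendable trail targeting the construct, and is itself
well-formed. -/
theorem tes_members_nonextendable_and_wellformed {V A L : Type*}
    (Cs : CSpace V A L) (hCs : IsCSpace Cs)
    (g : PreGraph V A L) (t : V) (hc : IsConstruction Cs g t)
    (tr : Trail V A) (htr : IsTrailIn g tr) (hwf : WellFormed g tr) (htgt : tr.tgt = t)
    (S : List (Trail V A)) (hTES : TES g tr S) :
    ∀ tr' ∈ S,
      (IsTrailIn g (tr'.append tr) ∧ NonExtendable g (tr'.append tr) ∧
        (tr'.append tr).tgt = t) ∧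
      WellFormed g tr' := by
  have hsg := hc.2.1
  have hg := hsg.1
  have hdis := hg.1
  have hincfun := hg.2.1
  have hbip := hg.2.2.1
  revert htr hwf htgt
  induction hTES with
  | nonext tr h =>
    intro htr hwf htgt tr' htr'
    rw [List.mem_singleton] at htr'
    subst htr'
    exact ⟨⟨htr, h, htgt⟩, hwf.1, hwf.1⟩
  | ext tr a u ars Ss hext hinc hars hlen hrec ih =>
    intro htr hwf htgt tr' htr'
    rw [List.mem_flatten] at htr'
    obtain ⟨l, hl, htrl⟩ := htr'
    obtain ⟨i, hi⟩ := List.mem_iff_getElem?.mp hl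
    rw [List.getElem?_zipWith] at hi
    obtain ⟨ai, hiars⟩ : ∃ ai, ars[i]? = some ai := by
      cases h' : ars[i]? with
      | none => rw [h'] at hi; simp at hi
      | some ai => exact ⟨ai, rfl⟩
    obtain ⟨Si, hiSs⟩ : ∃ Si, Ss[i]? = some Si := by
      cases h' : Ss[i]? with
      | none => rw [h', hiars] at hi; simp at hi
      | some Si => exact ⟨Si, rfl⟩
    rw [hiars, hiSs] at hi
    simp only [Option.some.injEq] at hi
    subst hi
    obtain ⟨e, he, rfl⟩ := List.mem_map.mp htrl
    have hmem : ai ∈ ars := List.mem_iff_getElem?.mpr ⟨i, hiars⟩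
    obtain ⟨haiArr, si, hsi⟩ := (hars.2.1 ai).mp hmem
    have huCf : u ∈ g.Cf := by
      rcases hbip a u tr.src hinc with ⟨-, hs⟩ | ⟨hu, -⟩
      · exact (Set.disjoint_left.mp hdis hwf.1 hs).elim
      · exact hu
    have hsiTk : si ∈ g.Tk := by
      rcases hbip ai si u hsi with ⟨h1, -⟩ | ⟨-, h2⟩
      · exact h1
      · exact (Set.disjoint_left.mp hdis h2 huCf).elim
    have hne : ai ≠ a := by
      rintro rfl
      obtain ⟨y, -, hy⟩ := hincfun.2 ai hext.1
      have hpair : ((si, u) : V × V) = (u, tr.src) := (hy _ hsi).trans (hy _ hinc).symm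
      have hu : u = tr.src := (Prod.mk.injEq _ _ _ _ ▸ hpair).2
      rw [hu] at huCf
      exact Set.disjoint_left.mp hdis hwf.1 huCf
    have hnotin : ai ∉ tr.arrows := by
      intro hmem'
      rcases chain_next hincfun htr.2.1 hmem' hsi with h | ⟨b, hb, z, hz⟩
      · rw [h] at huCf
        exact Set.disjoint_left.mp hdis hwf.2 huCf
      · have hbArr := chain_mem_arr htr.2.1 b hb
        have hba : b = a := unique_out hsg huCf b a z tr.src hbArr hext.1 hz hinc
        rw [hba] at hb
        exact hext.2.1 hb
    have htri : IsTrailIn g ⟨ai :: a :: tr.arrows, si, tr.tgt⟩ := by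
      refine ⟨?_, ⟨haiArr, u, hsi, hext.1, tr.src, hinc, htr.2.1⟩, Or.inl hsiTk, htr.2.2.2⟩
      refine List.nodup_cons.mpr ⟨?_, List.nodup_cons.mpr ⟨hext.2.1, htr.1⟩⟩
      simp [List.mem_cons, hne, hnotin]
    have hIH := ih i ai si Si hiars hiSs hsi htri ⟨hsiTk, hwf.2⟩ htgt e he
    have hkey : (Trail.mk (e.arrows ++ [ai, a]) e.src tr.src).append tr
        = e.append ⟨ai :: a :: tr.arrows, si, tr.tgt⟩ := by
      simp [Trail.append]
    rw [hkey]
    exact ⟨hIH.1, hIH.2.1, hwf.1⟩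

end RST
end

section
/- Let (g, t) be a construction containing a well-formed trail tr with source t′ and target t. Then every trail tr′ such that tr′ ⊕ tr is a well-formed, non-extendable trail occurs in the trail extension sequence TES(tr). -/
namespace RST

variable {V A L : Type*}

section AuxTES

variable {V A L : Type*}

lemma chainIn_append {g : PreGraph V A L} {l1 l2 : List A} {s t : V} :
    ChainIn g (l1 ++ l2) s t ↔ ∃ m, ChainIn g l1 s m ∧ ChainIn g l2 m t := by
  induction l1 generalizing s with
  | nil =>
    constructor
    · intro h; exact ⟨s, rfl, h⟩
    · rintro ⟨m, hm, h⟩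
      have : s = m := hm
      rwa [this]
  | cons a l ih =>
    constructor
    · intro h
      obtain ⟨ha, m, hm, h2⟩ : a ∈ g.Arr ∧ ∃ m, (a, (s, m)) ∈ g.inc ∧
          ChainIn g (l ++ l2) m t := h
      obtain ⟨m', h1, h2'⟩ := ih.mp h2
      exact ⟨m', show a ∈ g.Arr ∧ ∃ m, (a, (s, m)) ∈ g.inc ∧ ChainIn g l m m' from
        ⟨ha, m, hm, h1⟩, h2'⟩
    · rintro ⟨m', hh, h2⟩
      obtain ⟨ha, m, hm, h1⟩ : a ∈ g.Arr ∧ ∃ m, (a, (s, m)) ∈ g.inc ∧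
          ChainIn g l m m' := hh
      exact show a ∈ g.Arr ∧ ∃ m, (a, (s, m)) ∈ g.inc ∧ ChainIn g (l ++ l2) m t from
        ⟨ha, m, hm, ih.mpr ⟨m', h1, h2⟩⟩

lemma inc_det {g : PreGraph V A L} (hg : IsGraph g) {a : A} {v w v' w' : V}
    (h1 : (a, (v, w)) ∈ g.inc) (h2 : (a, (v', w')) ∈ g.inc) : v = v' ∧ w = w' := by
  obtain ⟨-, hf, -⟩ := hg
  have ha : a ∈ g.Arr := hf.1 _ h1
  obtain ⟨y, -, huniq⟩ := hf.2 a ha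
  have e : ((v, w) : V × V) = (v', w') := (huniq _ h1).trans (huniq _ h2).symm
  rw [Prod.mk.injEq] at e
  exact e

lemma chain_src_eq {g : PreGraph V A L} (hg : IsGraph g) {l : List A} {s s' t : V}
    (h : ChainIn g l s t) (h' : ChainIn g l s' t) : s = s' := by
  cases l with
  | nil =>
    have e1 : s = t := h
    have e2 : s' = t := h'
    rw [e1, e2]
  | cons a rest =>
    obtain ⟨-, m, hm, -⟩ : a ∈ g.Arr ∧ ∃ m, (a, (s, m)) ∈ g.inc ∧
        ChainIn g rest m t := h
    obtain ⟨-, m', hm', -⟩ : a ∈ g.Arr ∧ ∃ m, (a, (s', m)) ∈ g.inc ∧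
        ChainIn g rest m t := h'
    exact (inc_det hg hm hm').1

lemma mem_zipWith_of_getElem? {α β γ : Type*} (f : α → β → γ) :
    ∀ (i : ℕ) (as : List α) (bs : List β) (a : α) (b : β),
      as[i]? = some a → bs[i]? = some b → f a b ∈ List.zipWith f as bs := by
  intro i
  induction i with
  | zero =>
    intro as bs a b ha hb
    cases as with
    | nil => simp at ha
    | cons x as' =>
      cases bs with
      | nil => simp at hb
      | cons y bs' =>
        simp only [List.getElem?_cons_zero, Option.some.injEq] at ha hb
        subst ha; subst hb
        exact List.mem_cons_self
  | succ n ih =>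
    intro as bs a b ha hb
    cases as with
    | nil => simp at ha
    | cons x as' =>
      cases bs with
      | nil => simp at hb
      | cons y bs' =>
        simp only [List.getElem?_cons_succ] at ha hb
        exact List.mem_cons_of_mem _ (ih as' bs' a b ha hb)

lemma tes_complete_aux {g : PreGraph V A L} (hg : IsGraph g) (huni : UniStructured g)
    {tr : Trail V A} {S : List (Trail V A)} (hTES : TES g tr S) :
    tr.src ∈ g.Tk → ChainIn g tr.arrows tr.src tr.tgt →
    ∀ tr' : Trail V A, tr'.tgt = tr.src →
      IsTrailIn g (tr'.append tr) → WellFormed g (tr'.append tr) →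
      NonExtendable g (tr'.append tr) → tr' ∈ S := by
  induction hTES with
  | nonext tr h =>
    intro hsrcTk hchain tr' htgt' htrail hwf' hne
    obtain ⟨l, s', t'⟩ := tr'
    have htgt'' : t' = tr.src := htgt'
    have hnodup : (l ++ tr.arrows).Nodup := htrail.1
    have hch0 : ChainIn g (l ++ tr.arrows) s' tr.tgt := htrail.2.1
    rcases l.eq_nil_or_concat with rfl | ⟨l₀, b, rfl⟩
    · have hch : ChainIn g tr.arrows s' tr.tgt := hch0
      have hs : s' = tr.src := chain_src_eq hg hch hchain
      subst hs; subst htgt''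
      exact List.mem_singleton.mpr rfl
    · exfalso
      simp only [List.concat_eq_append] at hnodup hch0
      rw [List.append_assoc] at hch0
      obtain ⟨m, -, hrest⟩ := chainIn_append.mp hch0
      obtain ⟨hbArr, p, hbinc, hptail⟩ : b ∈ g.Arr ∧ ∃ p, (b, (m, p)) ∈ g.inc ∧
          ChainIn g tr.arrows p tr.tgt := hrest
      have hp : p = tr.src := chain_src_eq hg hptail hchain
      subst hp
      have hbl : b ∈ l₀ ++ [b] := by simp
      have hbnot : b ∉ tr.arrows := (List.disjoint_of_nodup_append hnodup) hbl
      exact h ⟨b, hbArr, hbnot, m, hbinc⟩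
  | ext tr a u ars Ss hext hinc hars hlen hrec ih =>
    intro hsrcTk hchain tr' htgt' htrail hwf' hne
    have hdisj : Disjoint g.Tk g.Cf := hg.1
    have hdich := hg.2.2.1
    have huCf : u ∈ g.Cf := by
      rcases hdich a u tr.src hinc with ⟨-, hsrcCf⟩ | ⟨h1, -⟩
      · exact absurd hsrcCf (Set.disjoint_left.mp hdisj hsrcTk)
      · exact h1
    obtain ⟨l, s', t'⟩ := tr'
    have htgt'' : t' = tr.src := htgt'
    have hnodup : (l ++ tr.arrows).Nodup := htrail.1
    have hch0 : ChainIn g (l ++ tr.arrows) s' tr.tgt := htrail.2.1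
    have hs'Tk : s' ∈ g.Tk := hwf'.1
    have hne' : ¬ ∃ x, x ∈ g.Arr ∧ x ∉ l ++ tr.arrows ∧ ∃ s, (x, (s, s')) ∈ g.inc := hne
    rcases l.eq_nil_or_concat with rfl | ⟨l₀, b, rfl⟩
    · exfalso
      have hch : ChainIn g tr.arrows s' tr.tgt := hch0
      have hs : s' = tr.src := chain_src_eq hg hch hchain
      subst hs
      exact hne' ⟨a, hext.1, by simpa using hext.2.1, u, hinc⟩
    · simp only [List.concat_eq_append] at hnodup hch0 hne' ⊢
      rw [List.append_assoc] at hch0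
      obtain ⟨m, hml, hrest'⟩ := chainIn_append.mp hch0
      obtain ⟨hbArr, p, hbinc, hptail⟩ : b ∈ g.Arr ∧ ∃ p, (b, (m, p)) ∈ g.inc ∧
          ChainIn g tr.arrows p tr.tgt := hrest'
      have hp : p = tr.src := chain_src_eq hg hptail hchain
      subst hp
      have hba : a = b := huni tr.src hsrcTk a hext.1 b hbArr ⟨u, hinc⟩ ⟨m, hbinc⟩
      subst hba
      have hmu : m = u := (inc_det hg hbinc hinc).1
      rw [hmu] at hml
      rcases l₀.eq_nil_or_concat with rfl | ⟨l₁, c, rfl⟩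
      · exfalso
        have hs'u : s' = u := hml
        rw [hs'u] at hs'Tk
        exact Set.disjoint_left.mp hdisj hs'Tk huCf
      · simp only [List.concat_eq_append] at hml hnodup hch0 hne' ⊢
        obtain ⟨q, hql, hqc⟩ := chainIn_append.mp hml
        obtain ⟨hcArr, r, hcinc, hr⟩ : c ∈ g.Arr ∧ ∃ r, (c, (q, r)) ∈ g.inc ∧
            ChainIn g ([] : List A) r u := hqc
        have hru : r = u := hr
        rw [hru] at hcinc
        have hcars : c ∈ ars := (hars.2.1 c).mpr ⟨hcArr, q, hcinc⟩
        have hqTk : q ∈ g.Tk := by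
          rcases hdich c q u hcinc with ⟨h1, -⟩ | ⟨-, h2⟩
          · exact h1
          · exact absurd h2 (Set.disjoint_right.mp hdisj huCf)
        obtain ⟨i, hi⟩ := List.mem_iff_getElem?.mp hcars
        have hilt : i < ars.length := by
          by_contra hcon
          rw [List.getElem?_eq_none (le_of_not_gt hcon)] at hi
          exact Option.some_ne_none c hi.symm
        have hiltS : i < Ss.length := hlen ▸ hilt
        have hSi : Ss[i]? = some Ss[i] := List.getElem?_eq_getElem hiltS
        have hchainInner : ChainIn g (c :: a :: tr.arrows) q tr.tgt :=
          show c ∈ g.Arr ∧ ∃ m, (c, (q, m)) ∈ g.inc ∧ ChainIn g (a :: tr.arrows) m tr.tgt from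
            ⟨hcArr, u, hcinc,
              show a ∈ g.Arr ∧ ∃ m, (a, (u, m)) ∈ g.inc ∧ ChainIn g tr.arrows m tr.tgt from
                ⟨hext.1, tr.src, hinc, hchain⟩⟩
        have hIH := ih i c q Ss[i] hi hSi hcinc hqTk hchainInner
        have harr : l₁ ++ [c] ++ [a] ++ tr.arrows = l₁ ++ (c :: a :: tr.arrows) := by
          simp
        have he : (⟨l₁, s', q⟩ : Trail V A) ∈ Ss[i] := by
          apply hIH ⟨l₁, s', q⟩ rfl
          · refine ⟨?_, ?_, ?_, ?_⟩
            · show (l₁ ++ (c :: a :: tr.arrows)).Nodup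
              rw [← harr]; exact hnodup
            · show ChainIn g (l₁ ++ (c :: a :: tr.arrows)) s' tr.tgt
              rw [← harr, List.append_assoc (l₁ ++ [c])]; exact hch0
            · exact htrail.2.2.1
            · exact htrail.2.2.2
          · exact ⟨hs'Tk, hwf'.2⟩
          · intro hextd
            obtain ⟨x, hx1, hx2, hx3⟩ := hextd
            refine hne' ⟨x, hx1, ?_, hx3⟩
            rw [harr]
            exact hx2
        apply List.mem_flatten.mpr
        refine ⟨(Ss[i]).map
          (fun e => (⟨e.arrows ++ [c, a], e.src, tr.src⟩ : Trail V A)), ?_, ?_⟩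
        · exact mem_zipWith_of_getElem? _ i ars Ss c Ss[i] hi hSi
        · apply List.mem_map.mpr
          refine ⟨⟨l₁, s', q⟩, he, ?_⟩
          subst htgt''
          simp [Trail.mk.injEq]

end AuxTES

/-- every trail extending a well-formed trail to a well-formed non-extendable
trail occurs in its trail extension sequence. -/
theorem tes_is_complete {V A L : Type*}
    (Cs : CSpace V A L) (hCs : IsCSpace Cs)
    (g : PreGraph V A L) (t t' : V) (hc : IsConstruction Cs g t)
    (tr : Trail V A) (htr : IsTrailIn g tr) (hwf : WellFormed g tr)
    (hsrc : tr.src = t') (htgt : tr.tgt = t)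
    (S : List (Trail V A)) (hTES : TES g tr S) :
    ∀ tr' : Trail V A, tr'.tgt = tr.src →
      IsTrailIn g (tr'.append tr) → WellFormed g (tr'.append tr) →
      NonExtendable g (tr'.append tr) → tr' ∈ S := by
  have hg : IsGraph g := hc.2.1.1
  have huni : UniStructured g := hc.2.2.2.2.2.1
  exact tes_complete_aux hg huni hTES hwf.1 htr.2.1

end RST
end
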